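/- arXiv:2406.12781 — 3 statements merged into one kernel-verified Lean document; each statement's English description precedes it below -/
import Mathlib

section
/- Star Toeplitz–Hankel decomposition: For any symbols a, b ∈ V, the star-Toeplitz and star-Hankel operators satisfy T(a⋆b) = T(a)T(b) + H(a)H(b^∼) as bounded operators on ℓ²(ℕ); equivalently, for all j,k ≥ 1, T_{j,k}(a⋆b) = ∑_{l≥1} T_{j,l}(a)T_{l,k}(b) + ∑_{l≥1} H_{j,l}(a)H_{l,k}(b^∼), with both series absolutely convergent. -/
open Filter MeasureTheory

noncomputable section

/-- A symbol `a`, where `a k` is the circle function `a_{k/2}` at half-integer `x = k/2`. -/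
abbrev Symb := ℤ → ℂ → ℂ

/-- `m`-th Fourier coefficient of a function on the unit circle. -/
def fCoef (f : ℂ → ℂ) (m : ℤ) : ℂ :=
  (2 * (Real.pi : ℂ))⁻¹ * ∫ p in (-Real.pi)..Real.pi,
    f (Complex.exp (Complex.I * (p : ℂ))) * Complex.exp (-(Complex.I * (m : ℂ) * (p : ℂ)))

/-- Matrix element `L_{j,k}(a) = (a_{(j+k)/2})_{j-k}` of the star-Laurent operator. -/
def Lmat (a : Symb) (j k : ℤ) : ℂ := fCoef (a (j + k)) (j - k)

/-- The annulus `ρ < |z| < ρ⁻¹`. -/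
def annulus (ρ : ℝ) : Set ℂ := {z : ℂ | ρ < ‖z‖ ∧ ‖z‖ < ρ⁻¹}

/-- Membership in `V_ρ`: analytic extension to the annulus, uniformly bounded in `x`. -/
def memVrho (ρ : ℝ) (a : Symb) : Prop :=
  (∀ k : ℤ, AnalyticOnNhd ℂ (a k) (annulus ρ)) ∧
    ∃ M : ℝ, ∀ (k : ℤ), ∀ z ∈ annulus ρ, ‖a k z‖ ≤ M

/-- Membership in `V = ⋃_{ρ ∈ (0,1)} V_ρ`. -/
def memV (a : Symb) : Prop := ∃ ρ : ℝ, ρ ∈ Set.Ioo (0 : ℝ) 1 ∧ memVrho ρ a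

/-- The Moyal star product of two symbols. -/
def starProd (a b : Symb) : Symb := fun x z =>
  ∑' mn : ℤ × ℤ, z ^ (mn.1 + mn.2) * fCoef (a (x + mn.1)) mn.2 * fCoef (b (x - mn.2)) mn.1

/-- Two symbols are equivalent if they generate the same star-Laurent matrix. -/
def symbolEquiv (a b : Symb) : Prop := ∀ j k : ℤ, Lmat a j k = Lmat b j k

/-- The unit symbol. -/
def oneSymbol : Symb := fun _ _ => 1

/-- `+` symbols: the star-Laurent matrix is lower triangular. -/
def isPlus (a : Symb) : Prop := ∀ j k : ℤ, j < k → Lmat a j k = 0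

/-- `-` symbols: the star-Laurent matrix is upper triangular. -/
def isMinus (a : Symb) : Prop := ∀ j k : ℤ, k < j → Lmat a j k = 0

/-- Matrix element of the star-Toeplitz operator (meaningful for `j, k ≥ 1`). -/
def Tmat (a : Symb) (j k : ℕ) : ℂ := Lmat a (j : ℤ) (k : ℤ)

/-- Matrix element of the star-Hankel operator (meaningful for `j, k ≥ 1`). -/
def Hmat (a : Symb) (j k : ℕ) : ℂ := fCoef (a ((j : ℤ) - k + 1)) ((j : ℤ) + k - 1)

/-- The `n × n` star-Toeplitz matrix. -/
def Tn (a : Symb) (n : ℕ) : Matrix (Fin n) (Fin n) ℂ :=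
  Matrix.of fun j k : Fin n => Lmat a ((j : ℤ) + 1) ((k : ℤ) + 1)

/-- The reflected symbol `(a^∼)_x(z) = a_{1-x}(z⁻¹)`. -/
def reflect (a : Symb) : Symb := fun x z => a (2 - x) z⁻¹

/-- Pointwise difference of symbols. -/
def subSym (a b : Symb) : Symb := fun x z => a x z - b x z

/-- Pointwise scalar multiple of a symbol. -/
def smulSym (c : ℂ) (a : Symb) : Symb := fun x z => c * a x z

/-- Star powers of a symbol. -/
def starPow (a : Symb) : ℕ → Symb
  | 0 => oneSymbol
  | n + 1 => starProd a (starPow a n)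

/-- The star exponential of a symbol. -/
def expStar (a : Symb) : Symb := fun x z =>
  ∑' n : ℕ, ((Nat.factorial n : ℂ))⁻¹ * starPow a n x z

/-- `b` is a star logarithm in `V` of `a`. -/
def IsStarLog (b a : Symb) : Prop := memV b ∧ symbolEquiv (expStar b) a

/-- `b` is a star inverse of `a`. -/
def IsStarInv (a b : Symb) : Prop :=
  symbolEquiv (starProd a b) oneSymbol ∧ symbolEquiv (starProd b a) oneSymbol

/-- The symbol `(x, z) ↦ z^n`. -/
def zpowSym (n : ℤ) : Symb := fun _ z => z ^ n

/-- The Moyal bracket `{c, d}_M = -i (c ⋆ d - d ⋆ c)`. -/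
def moyalBracket (c d : Symb) : Symb := fun x z =>
  -Complex.I * (starProd c d x z - starProd d c x z)

/-- `a` has zero star winding number: it admits left and right Wiener-Hopf star
factorizations with `±` factors in `V` whose star logarithms exist in `V`. -/
def HasZeroStarWinding (a : Symb) : Prop :=
  ∃ aLp aLm aRm aRp bLp bLm bRm bRp : Symb,
    isPlus aLp ∧ isMinus aLm ∧ isMinus aRm ∧ isPlus aRp ∧
    memV aLp ∧ memV aLm ∧ memV aRm ∧ memV aRp ∧
    IsStarLog bLp aLp ∧ IsStarLog bLm aLm ∧ IsStarLog bRm aRm ∧ IsStarLog bRp aRp ∧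
    symbolEquiv a (starProd aLp aLm) ∧ symbolEquiv a (starProd aRm aRp)

/-- Operator norm of an infinite matrix, as the least constant `C` with
`‖A v‖₂ ≤ C ‖v‖₂` for finitely supported `v`. -/
def matOpNorm {ι κ : Type*} (A : ι → κ → ℂ) : ℝ :=
  sInf {C : ℝ | 0 ≤ C ∧ ∀ v : κ →₀ ℂ,
    ∑' j : ι, ‖∑ k ∈ v.support, A j k * v k‖ ^ 2 ≤ C ^ 2 * ∑ k ∈ v.support, ‖v k‖ ^ 2}

/-- The matrix of `P̃_n A P̃_n`. -/
def PAP (n : ℕ) (A : ℤ → ℤ → ℂ) : ℤ → ℤ → ℂ := fun j k =>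
  if |j| ≤ (n : ℤ) ∧ |k| ≤ (n : ℤ) then A j k else 0

/-- The matrix of `P̃_n A Q̃_m`. -/
def PAQ (n m : ℕ) (A : ℤ → ℤ → ℂ) : ℤ → ℤ → ℂ := fun j k =>
  if |j| ≤ (n : ℤ) ∧ ¬ |k| ≤ (m : ℤ) then A j k else 0

/-- The matrix of `Q̃_m A P̃_n`. -/
def QAP (m n : ℕ) (A : ℤ → ℤ → ℂ) : ℤ → ℤ → ℂ := fun j k =>
  if ¬ |j| ≤ (m : ℤ) ∧ |k| ≤ (n : ℤ) then A j k else 0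

/-- The localization norm `‖a‖_loc = ∑_{n≥0} 2^{-(n+1)} ‖P̃_n L(a) P̃_n‖`. -/
def locNorm (a : Symb) : ℝ :=
  ∑' n : ℕ, ((2 : ℝ))⁻¹ ^ (n + 1) * matOpNorm (PAP n (Lmat a))


/-- The operator exponential `e^T` applied to a symbol, via the power series. -/
def opExp (T : Symb → Symb) : Symb → Symb := fun d x z =>
  ∑' n : ℕ, ((Nat.factorial n : ℂ))⁻¹ * (T^[n] d) x z

/-- Taylor coefficients of `ψ₁(x) = 2x (x log x + 1 - x)/(x-1)²` around `x = 1`. -/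
def psi1Coef : ℕ → ℂ := fun j =>
  if j = 0 then 1 else 4 * (-1) ^ (j + 1) / ((j : ℂ) * ((j : ℂ) + 1) * ((j : ℂ) + 2))

/-- `ψ₁` of an operator, applied to a symbol, via the power series around the identity. -/
def opPsi1 (T : Symb → Symb) : Symb → Symb := fun d x z =>
  ∑' n : ℕ, psi1Coef n * ((fun e : Symb => fun x' z' => T e x' z' - e x' z')^[n] d) x z

/-- The operator `α • 𝓜(c)`, where `𝓜(c) d = {c,d}_M` is the Moyal adjoint action. -/
def MopS (c : Symb) (α : ℂ) : Symb → Symb := fun e => smulSym α (moyalBracket c e)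

/-- `Φ_BCH(c,d)` of the paper. -/
def PhiBCH (c d : Symb) : Symb := fun x z =>
  (∫ t in (0:ℝ)..(1:ℝ), ∫ s in (0:ℝ)..(1:ℝ),
      (opExp (MopS c (-Complex.I * (s : ℂ)))
        ((opPsi1 (fun e => opExp (MopS c Complex.I) (opExp (MopS d (Complex.I * (t : ℂ))) e))) d)) x z)
  - (∫ t in (0:ℝ)..(1:ℝ), ∫ s in (0:ℝ)..t,
      (opExp (MopS c (Complex.I * (s : ℂ)))
        (opExp (MopS d Complex.I)
          ((opPsi1 (fun e => opExp (MopS d (-Complex.I)) (opExp (MopS c (-Complex.I * (t : ℂ))) e))) c))) x z)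

/-- The pair `(c,d)` belongs to `S_Φ`. -/
def memSPhi (c d : Symb) : Prop :=
  ∃ (F : ℕ → Symb) (ε : ℝ), 0 < ε ∧
    (∀ ν : ℝ, |ν - 1| < ε → Summable (fun n : ℕ => matOpNorm (Lmat (F n)) * |ν| ^ n)) ∧
    (∀ ν : ℝ, |ν - 1| < ε → memV (fun x z => ∑' n : ℕ, (ν : ℂ) ^ n * F n x z)) ∧
    (∀ ν : ℝ, |ν - 1| < ε →
      symbolEquiv (PhiBCH (smulSym (ν : ℂ) c) (smulSym (ν : ℂ) d))
        (fun x z => ∑' n : ℕ, (ν : ℂ) ^ (n + 1) * F n x z))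

/-- A sequence of symbols regularizes `a` (Definition 3.13). -/
def Regularizes (A : ℕ → Symb) (a : Symb) : Prop :=
  Filter.Tendsto (fun k => locNorm (subSym (A k) a)) Filter.atTop (nhds 0) ∧
  ∃ (aLp aLm aRm aRp bLp bLm bRm bRp : ℕ → Symb) (ρ M : ℝ), ρ ∈ Set.Ioo (0:ℝ) 1 ∧
    (∀ k, isPlus (aLp k) ∧ isMinus (aLm k) ∧ isMinus (aRm k) ∧ isPlus (aRp k)) ∧
    (∀ k, memV (aLp k) ∧ memV (aLm k) ∧ memV (aRm k) ∧ memV (aRp k)) ∧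
    (∀ k, symbolEquiv (A k) (starProd (aLp k) (aLm k)) ∧
          symbolEquiv (A k) (starProd (aRm k) (aRp k))) ∧
    (∀ k, symbolEquiv (expStar (bLp k)) (aLp k) ∧ symbolEquiv (expStar (bLm k)) (aLm k) ∧
          symbolEquiv (expStar (bRm k)) (aRm k) ∧ symbolEquiv (expStar (bRp k)) (aRp k)) ∧
    (∀ k, memVrho ρ (bLp k) ∧ memVrho ρ (bLm k) ∧ memVrho ρ (bRm k) ∧ memVrho ρ (bRp k)) ∧
    (∀ k, ∀ b : Symb, (b = bLp k ∨ b = bLm k ∨ b = bRm k ∨ b = bRp k) →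
        ∀ (j : ℤ), ∀ z ∈ annulus ρ, ‖b j z‖ ≤ M) ∧
    (∀ k, memSPhi (bLp k) (bLm k) ∧ memSPhi (bRm k) (bRp k)) ∧
    (∀ k, ∀ b : Symb, (b = bLp k ∨ b = bLm k ∨ b = bRm k ∨ b = bRp k) →
        Summable (fun jl : ℕ × ℕ => ‖Tmat b (jl.1 + 1) (jl.2 + 1)‖))

/-- `a` admits a regularisation. -/
def IsRegularizable (a : Symb) : Prop := ∃ A : ℕ → Symb, Regularizes A a

/-- The boundary term `E_x^{R/L}` of the strong Szegő-type theorem; `k = 2x`. -/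
def Eterm (bp bm dm dp : Symb) (k : ℤ) : ℂ :=
  (1/2 : ℂ) * ∑' m : ℕ, ∑ j ∈ Finset.Icc 1 (m + 1),
    (fCoef (bp (k + 2*(j:ℤ) - ((m:ℤ) + 2))) ((m:ℤ) + 1) *
        fCoef (dm (k + 2*(j:ℤ) - ((m:ℤ) + 2))) (-((m:ℤ) + 1)) +
      fCoef (dp (k + 2*(j:ℤ) - ((m:ℤ) + 2))) ((m:ℤ) + 1) *
        fCoef (bm (k + 2*(j:ℤ) - ((m:ℤ) + 2))) (-((m:ℤ) + 1)))

/-- `T(cinv)` is a two-sided (matrix) inverse of `T(c)` on `ℓ²(ℕ)`. -/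
def TmatTwoSidedInverse (c cinv : Symb) : Prop :=
  ∀ j k : ℕ, 1 ≤ j → 1 ≤ k →
    (∑' l : ℕ, Tmat c j (l + 1) * Tmat cinv (l + 1) k) = (if j = k then 1 else 0) ∧
    (∑' l : ℕ, Tmat cinv j (l + 1) * Tmat c (l + 1) k) = (if j = k then 1 else 0)
-- ### block D : functions on ℝ × (strip) representing symbols

/-- The horizontal strip `log ρ < Im z < -log ρ` in the complex plane. -/
def strip (ρ : ℝ) : Set ℂ := {z : ℂ | Real.log ρ < z.im ∧ z.im < -Real.log ρ}

/-- `a = [F]`: the function `F` on `ℝ × (ℝ/2πℤ)` represents the symbol `a`. -/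
def RepBy (a : Symb) (F : ℝ → ℂ → ℂ) : Prop :=
  ∀ k m : ℤ, (k + m) % 2 = 0 →
    fCoef (a k) m = (2 * (Real.pi : ℂ))⁻¹ *
      ∫ p in (-Real.pi)..Real.pi, F ((k : ℝ) / 2) (p : ℂ) * Complex.exp (-(Complex.I * (m : ℂ) * (p : ℂ)))

/-- Partial derivative in the first (real) argument. -/
def D1 (F : ℝ → ℂ → ℂ) : ℝ → ℂ → ℂ := fun x p => deriv (fun y => F y p) x

/-- Partial derivative in the second (complex) argument. -/
def D2 (F : ℝ → ℂ → ℂ) : ℝ → ℂ → ℂ := fun x p => deriv (fun q => F x q) p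

/-- The `+` part `g⁺` of a function on `ℝ × (ℝ/2πℤ)`. -/
def plusPart (F : ℝ → ℂ → ℂ) : ℝ → ℂ → ℂ := fun y p =>
  ∑' n : ℕ, Complex.exp (Complex.I * (n : ℂ) * p) *
    ((2 * (Real.pi : ℂ))⁻¹ * ∫ q in (-Real.pi)..Real.pi,
      F y (q : ℂ) * Complex.exp (-(Complex.I * (n : ℂ) * (q : ℂ))))

/-- The `-` part `g⁻` of a function on `ℝ × (ℝ/2πℤ)`. -/
def minusPart (F : ℝ → ℂ → ℂ) : ℝ → ℂ → ℂ := fun y p =>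
  ∑' n : ℕ, Complex.exp (-(Complex.I * ((n : ℂ) + 1) * p)) *
    ((2 * (Real.pi : ℂ))⁻¹ * ∫ q in (-Real.pi)..Real.pi,
      F y (q : ℂ) * Complex.exp (Complex.I * ((n : ℂ) + 1) * (q : ℂ)))

/-- Poisson bracket `{u,v} = ∂₁u ∂₂v - ∂₁v ∂₂u`. -/
def pois (u v : ℝ → ℂ → ℂ) : ℝ → ℂ → ℂ := fun y p =>
  D1 u y p * D2 v y p - D1 v y p * D2 u y p

/-- Truncation of the Moyal product to the first `k` orders of derivatives. -/
def moyalTrunc (k : ℕ) (ν : ℝ) (f g : ℝ → ℂ → ℂ) : ℝ → ℂ → ℂ := fun y p =>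
  ∑ j ∈ Finset.range k, ((Nat.factorial j : ℂ))⁻¹ * (Complex.I * (ν : ℂ) / 2) ^ j *
    ∑ i ∈ Finset.range (j + 1), (j.choose i : ℂ) * (-1) ^ (j - i) *
      (D1^[j - i] (D2^[i] f)) y p * (D1^[i] (D2^[j - i] g)) y p

/-- The second-order expansion of `log f₊ᴴ(ν) + log f₋ᴴ(ν)` (Corollary 4.5), `σ = σ_H`. -/
def whExp2 (σ : ℝ) (ν : ℝ) (g : ℝ → ℂ → ℂ) : ℝ → ℂ → ℂ := fun y p =>
  g y p + (Complex.I / 2) * (σ : ℂ) * (ν : ℂ) * pois (minusPart g) (plusPart g) y p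
    + ((ν : ℂ) ^ 2 / 8) *
      (2 * pois (plusPart g) (minusPart (pois (minusPart g) (plusPart g))) y p
        - 2 * pois (minusPart g) (plusPart (pois (minusPart g) (plusPart g))) y p
        - D2 (minusPart g) y p * pois (minusPart g) (D1 (plusPart g)) y p
        + D1 (minusPart g) y p * pois (minusPart g) (D2 (plusPart g)) y p
        - D1 (plusPart g) y p * pois (D2 (minusPart g)) (plusPart g) y p
        + D2 (plusPart g) y p * pois (D1 (minusPart g)) (plusPart g) y p
        - pois (D2 (minusPart g)) (D1 (plusPart g)) y p
        + pois (D1 (minusPart g)) (D2 (plusPart g)) y p)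

/-- The bidifferential operator `((∂_{φ₁}∂_{φ₂'} - ∂_{φ₂}∂_{φ₁'})/2)^N F(φ') R(φ)|_{φ'=φ}`. -/
def bidiff (N : ℕ) (F R : ℝ → ℂ → ℂ) : ℝ → ℂ → ℂ := fun y p =>
  ((1 : ℂ) / 2) ^ N * ∑ i ∈ Finset.range (N + 1), (N.choose i : ℂ) * (-1) ^ (N - i) *
    (D1^[N - i] (D2^[i] F)) y p * (D2^[N - i] (D1^[i] R)) y p

/-- Auxiliary family for the recursive definition of `R_m^{(ζ)}[f]`. -/
def RresAux (f : ℝ → ℂ → ℂ) (ζ : ℂ) : ℕ → ℕ → ℝ → ℂ → ℂ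
  | 0 => fun _ => fun y p => (ζ - f y p)⁻¹
  | m + 1 => fun n =>
      if n ≤ m then RresAux f ζ m n
      else fun y p => (ζ - f y p)⁻¹ *
        ∑ j ∈ Finset.range (m + 1),
          ((Nat.choose (2 * (m + 1)) (2 * j) : ℂ)) * (-1) ^ (m + 1 - j) *
            bidiff (2 * (m + 1 - j)) f (RresAux f ζ m j) y p

/-- The coefficients `R_m^{(ζ)}[f]` of the asymptotic expansion of the star resolvent. -/
def Rres (f : ℝ → ℂ → ℂ) (ζ : ℂ) (m : ℕ) : ℝ → ℂ → ℂ := RresAux f ζ m m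

/-- `E(c) = ∑_{k≥1} k (log c)_k (log c)_{-k}`. -/
def Efun (c : ℂ → ℂ) : ℂ :=
  ∑' k : ℕ, ((k : ℂ) + 1) * fCoef (fun z => Complex.log (c z)) ((k : ℤ) + 1) *
    fCoef (fun z => Complex.log (c z)) (-((k : ℤ) + 1))


namespace StarTH
open Complex intervalIntegral Metric
open scoped ENNReal NNReal

lemma abs_exp_int_mul (l : ℤ) (p : ℝ) :
    ‖Complex.exp ((l:ℂ) * (Complex.I * p))‖ = 1 := by
  rw [show (l:ℂ) * (Complex.I * p) = ((l * p : ℝ):ℂ) * Complex.I by push_cast; ring]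
  exact Complex.norm_exp_ofReal_mul_I _

lemma integral_exp_int (l : ℤ) :
    (∫ p in (-Real.pi)..Real.pi, Complex.exp ((l : ℂ) * (Complex.I * p)))
      = if l = 0 then (2 * (Real.pi:ℝ) : ℂ) else 0 := by
  rcases eq_or_ne l 0 with rfl | hl
  · simp only [Int.cast_zero, zero_mul, Complex.exp_zero, if_pos]
    rw [intervalIntegral.integral_const]
    push_cast
    ring_nf
    simp [Complex.real_smul]
  · have hc : (l:ℂ) * Complex.I ≠ 0 := mul_ne_zero (Int.cast_ne_zero.mpr hl) Complex.I_ne_zero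
    rw [if_neg hl]
    have h1 : ∀ p : ℝ, (l:ℂ) * (Complex.I * p) = ((l:ℂ) * Complex.I) * p := fun p => by ring
    simp_rw [h1]
    rw [integral_exp_mul_complex hc]
    have h2 : Complex.exp ((l:ℂ)*Complex.I*(Real.pi:ℝ)) = Complex.exp ((l:ℂ)*Complex.I*((-Real.pi:ℝ):ℂ)) := by
      rw [show ((l:ℂ)*Complex.I*((Real.pi:ℝ):ℂ)) = (l:ℂ)*Complex.I*((-Real.pi:ℝ):ℂ) + (l:ℂ)*(2*(Real.pi:ℝ)*Complex.I) by push_cast; ring]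
      rw [Complex.exp_add, Complex.exp_int_mul_two_pi_mul_I, mul_one]
    rw [h2, sub_self, zero_div]

lemma fCoef_reflect (b : Symb) (x m : ℤ) : fCoef (reflect b x) m = fCoef (b (2 - x)) (-m) := by
  unfold fCoef reflect
  congr 1
  set g : ℝ → ℂ := fun q : ℝ => b (2-x) (Complex.exp (Complex.I * q)) * Complex.exp (-(Complex.I * ((-m:ℤ):ℂ) * q)) with hg
  have h : ∀ p : ℝ, p ∈ Set.uIcc (-Real.pi) Real.pi →
      b (2-x) ((Complex.exp (Complex.I * p))⁻¹) * Complex.exp (-(Complex.I * (m:ℂ) * p))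
      = g (-p) := by
    intro p _
    rw [hg]
    simp only [Complex.ofReal_neg, ← Complex.exp_neg]
    congr 2 <;> push_cast <;> ring
  rw [intervalIntegral.integral_congr h, intervalIntegral.integral_comp_neg g, neg_neg]

lemma fCoef_bound {ρ : ℝ} (hρ0 : 0 < ρ) (hρ1 : ρ < 1) {f : ℂ → ℂ} {M : ℝ}
    (hf : AnalyticOnNhd ℂ f (annulus ρ))
    (hM : ∀ z ∈ annulus ρ, ‖f z‖ ≤ M)
    {r : ℝ} (hr0 : ρ < r) (hr1 : r < ρ⁻¹) (m : ℤ) :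
    ‖fCoef f m‖ ≤ M * r ^ (-m) := by
  have hrpos : 0 < r := hρ0.trans hr0
  have hπ := Real.pi_pos
  set g : ℂ → ℂ := fun z => f z * z ^ (-m - 1) with hgdef
  -- the closed annulus between radii t and u sits in `annulus ρ`
  have hsub : ∀ {t u : ℝ}, ρ < t → u < ρ⁻¹ →
      closedBall (0:ℂ) u \ ball (0:ℂ) t ⊆ annulus ρ := by
    intro t u ht hu z hz
    obtain ⟨hz1, hz2⟩ := hz
    rw [mem_closedBall, Complex.dist_eq, sub_zero] at hz1
    rw [mem_ball, Complex.dist_eq, sub_zero, not_lt] at hz2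
    exact ⟨ht.trans_le hz2, lt_of_le_of_lt hz1 hu⟩
  have hgd : ∀ z ∈ annulus ρ, DifferentiableAt ℂ g z := by
    intro z hz
    have hz0 : z ≠ 0 := by
      intro h; rw [h] at hz; simp [annulus] at hz; exact absurd hz.1 (not_lt.mpr hρ0.le)
    exact ((hf z hz).differentiableAt).mul (differentiableAt_zpow.mpr (Or.inl hz0))
  have hgc : ContinuousOn g (annulus ρ) := fun z hz => (hgd z hz).continuousAt.continuousWithinAt
  -- circle integrals over radius 1 and radius r agree
  have h1r : ρ < 1 := hρ1
  have h1r' : (1:ℝ) < ρ⁻¹ := (one_lt_inv₀ hρ0).mpr hρ1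
  have hkey : (∮ z in C(0, 1), g z) = ∮ z in C(0, r), g z := by
    rcases le_total r 1 with h | h
    · exact circleIntegral_eq_of_differentiable_on_annulus_off_countable hrpos h
        Set.countable_empty (hgc.mono (hsub hr0 h1r'))
        (fun z hz => hgd z (hsub hr0 h1r' ⟨ball_subset_closedBall hz.1.1, fun hc => hz.1.2 (ball_subset_closedBall hc)⟩))
    · exact (circleIntegral_eq_of_differentiable_on_annulus_off_countable one_pos h
        Set.countable_empty (hgc.mono (hsub h1r hr1))
        (fun z hz => hgd z (hsub h1r hr1 ⟨ball_subset_closedBall hz.1.1, fun hc => hz.1.2 (ball_subset_closedBall hc)⟩))).symm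
  -- bound the circle integral at radius r
  have hMnn : 0 ≤ M := le_trans (norm_nonneg _) (hM 1 (by simpa [annulus] using ⟨hρ1, h1r'⟩))
  have hbnd : ‖∮ z in C(0, r), g z‖ ≤ 2 * Real.pi * r * (M * r ^ (-m - 1)) := by
    apply circleIntegral.norm_integral_le_of_norm_le_const hrpos.le
    intro z hz
    have hzabs : ‖z‖ = r := by
      rw [mem_sphere_iff_norm, sub_zero] at hz; simpa using hz
    have hzmem : z ∈ annulus ρ := ⟨by rw [hzabs]; exact hr0, by rw [hzabs]; exact hr1⟩
    have : ‖g z‖ = ‖f z‖ * r ^ (-m - 1) := by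
      rw [hgdef]
      simp only [norm_mul]
      congr 1
      rw [← hzabs]
      simpa using norm_zpow z (-m - 1)
    rw [this]
    exact mul_le_mul_of_nonneg_right (hM z hzmem) (zpow_nonneg hrpos.le _)
  -- express fCoef via the circle integral at radius 1
  have h1 : (∮ z in C(0, 1), g z) = Complex.I *
      ∫ θ in (0:ℝ)..2*Real.pi, f (Complex.exp (Complex.I * θ)) * Complex.exp (-(Complex.I * (m:ℂ) * θ)) := by
    rw [circleIntegral]
    rw [← intervalIntegral.integral_const_mul]
    apply intervalIntegral.integral_congr
    intro θ _
    show deriv (circleMap 0 1) θ • g (circleMap 0 1 θ)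
        = Complex.I * (f (Complex.exp (Complex.I*θ)) * Complex.exp (-(Complex.I*(m:ℂ)*θ)))
    have hc : circleMap 0 1 θ = Complex.exp (Complex.I * θ) := by
      rw [circleMap_zero]; push_cast; rw [one_mul, mul_comm]
    rw [deriv_circleMap, hc, smul_eq_mul]
    simp only [hgdef]
    have e1 : Complex.exp (Complex.I * θ) ^ (-m-1) = Complex.exp (((-m-1:ℤ):ℂ) * (Complex.I * θ)) :=
      (Complex.exp_int_mul _ _).symm
    rw [e1, show Complex.exp (Complex.I*θ) * Complex.I *
        (f (Complex.exp (Complex.I*θ)) * Complex.exp (((-m-1:ℤ):ℂ) * (Complex.I*θ)))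
      = Complex.I * (f (Complex.exp (Complex.I*θ)) *
        (Complex.exp (Complex.I*θ) * Complex.exp (((-m-1:ℤ):ℂ) * (Complex.I*θ)))) from by ring,
      ← Complex.exp_add]
    congr 3
    push_cast
    ring
  have hper : Function.Periodic
      (fun θ:ℝ => f (Complex.exp (Complex.I * θ)) * Complex.exp (-(Complex.I * (m:ℂ) * θ))) (2*Real.pi) := by
    intro θ
    have e1 : Complex.exp (Complex.I * ((θ + 2*Real.pi : ℝ):ℂ)) = Complex.exp (Complex.I * θ) := by
      rw [show Complex.I * ((θ + 2*Real.pi : ℝ):ℂ) = Complex.I*θ + 2*Real.pi*Complex.I by push_cast; ring,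
        Complex.exp_add, Complex.exp_two_pi_mul_I, mul_one]
    have e2 : Complex.exp (-(Complex.I * (m:ℂ) * ((θ + 2*Real.pi : ℝ):ℂ))) = Complex.exp (-(Complex.I*(m:ℂ)*θ)) := by
      rw [show -(Complex.I * (m:ℂ) * ((θ + 2*Real.pi:ℝ):ℂ)) = -(Complex.I*(m:ℂ)*θ) + ((-m:ℤ):ℂ)*(2*Real.pi*Complex.I) by push_cast; ring,
        Complex.exp_add, Complex.exp_int_mul_two_pi_mul_I, mul_one]
    simp only [e1, e2]
  have h2 : (∫ p in (-Real.pi)..Real.pi,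
        f (Complex.exp (Complex.I * p)) * Complex.exp (-(Complex.I * (m:ℂ) * p)))
      = ∫ θ in (0:ℝ)..2*Real.pi, f (Complex.exp (Complex.I * θ)) * Complex.exp (-(Complex.I * (m:ℂ) * θ)) := by
    have := hper.intervalIntegral_add_eq (-Real.pi) 0
    rw [show -Real.pi + 2*Real.pi = Real.pi by ring, zero_add] at this
    exact this
  have hnorm2pi : ‖(2 * (Real.pi : ℂ))⁻¹‖ = (2*Real.pi)⁻¹ := by
    rw [norm_inv, show (2 * (Real.pi:ℂ)) = ((2*Real.pi : ℝ):ℂ) by push_cast; ring,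
      Complex.norm_real, Real.norm_eq_abs, abs_of_pos (by linarith)]
  have key : ‖fCoef f m‖ = (2*Real.pi)⁻¹ * ‖∮ z in C(0, r), g z‖ := by
    rw [fCoef, norm_mul, hnorm2pi, h2, ← hkey, h1, norm_mul, Complex.norm_I, one_mul]
  rw [key, hkey] at *
  calc (2*Real.pi)⁻¹ * ‖∮ z in C(0, r), g z‖
      ≤ (2*Real.pi)⁻¹ * (2 * Real.pi * r * (M * r ^ (-m - 1))) := by
        apply mul_le_mul_of_nonneg_left hbnd (by positivity)
    _ = M * r ^ (-m) := by
        rw [show (-m) = 1 + (-m-1) by ring, zpow_add₀ (ne_of_gt hrpos), zpow_one]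
        field_simp
        ring

lemma decay {ρ : ℝ} (hρ : ρ ∈ Set.Ioo (0:ℝ) 1) {a : Symb} (h : memVrho ρ a) :
    ∃ M s : ℝ, 0 ≤ M ∧ 0 < s ∧ s < 1 ∧ ∀ k m, ‖fCoef (a k) m‖ ≤ M * s ^ m.natAbs := by
  obtain ⟨hρ0, hρ1⟩ := hρ
  obtain ⟨han, M, hM⟩ := h
  have hMnn : 0 ≤ M := le_trans (norm_nonneg _)
    (hM 0 1 (by constructor <;> simp [hρ1, (one_lt_inv₀ hρ0).mpr hρ1]))
  set s : ℝ := (1+ρ)/2 with hs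
  have hs0 : 0 < s := by rw [hs]; linarith
  have hs1 : s < 1 := by rw [hs]; linarith
  have hρs : ρ < s := by rw [hs]; linarith
  have h1ρ : (1:ℝ) < ρ⁻¹ := (one_lt_inv₀ hρ0).mpr hρ1
  have hsinv : s < ρ⁻¹ := hs1.trans h1ρ
  have hρsi : ρ < s⁻¹ := hρ1.trans ((one_lt_inv₀ hs0).mpr hs1)
  have hsiρ : s⁻¹ < ρ⁻¹ := by
    exact inv_strictAnti₀ hρ0 hρs
  refine ⟨M, s, hMnn, hs0, hs1, fun k m => ?_⟩
  rcases le_or_gt 0 m with hm | hm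
  · have := fCoef_bound hρ0 hρ1 (han k) (hM k) hρsi hsiρ m
    calc ‖fCoef (a k) m‖ ≤ M * (s⁻¹) ^ (-m) := this
      _ = M * s ^ m.natAbs := by
          have hna : (m.natAbs:ℤ) = m := by omega
          rw [inv_zpow, ← zpow_neg, neg_neg, ← zpow_natCast s m.natAbs, hna]
  · have := fCoef_bound hρ0 hρ1 (han k) (hM k) hρs hsinv m
    calc ‖fCoef (a k) m‖ ≤ M * s ^ (-m) := this
      _ = M * s ^ m.natAbs := by
          have hna : (m.natAbs:ℤ) = -m := by omega
          rw [← zpow_natCast s m.natAbs, hna]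

lemma summable_geo_int {s : ℝ} (hs0 : 0 < s) (hs1 : s < 1) (C : ℝ) :
    Summable (fun l : ℤ => C * s ^ l.natAbs) := by
  apply Summable.of_nat_of_neg <;>
    simpa using ((summable_geometric_of_lt_one hs0.le hs1).mul_left C)

lemma fCoef_starProd {a b : Symb} {Ma Mb s : ℝ} (hs0 : 0 < s) (hs1 : s < 1)
    (hMa : 0 ≤ Ma) (hMb : 0 ≤ Mb)
    (ha : ∀ k m, ‖fCoef (a k) m‖ ≤ Ma * s ^ m.natAbs)
    (hb : ∀ k m, ‖fCoef (b k) m‖ ≤ Mb * s ^ m.natAbs)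
    (x q : ℤ) :
    fCoef (starProd a b x) q
      = ∑' m : ℤ, fCoef (a (x + m)) (q - m) * fCoef (b (x - (q - m))) m := by
  have hπ := Real.pi_pos
  have hle : -Real.pi ≤ Real.pi := by linarith
  set T : ℤ × ℤ → ℝ → ℂ := fun mn p =>
    fCoef (a (x + mn.1)) mn.2 * fCoef (b (x - mn.2)) mn.1 *
      Complex.exp (((mn.1 + mn.2 - q : ℤ) : ℂ) * (Complex.I * p)) with hT
  -- Step A : pointwise identity for the integrand
  have stepA : ∀ p : ℝ, p ∈ Set.uIcc (-Real.pi) Real.pi →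
      starProd a b x (Complex.exp (Complex.I * p)) * Complex.exp (-(Complex.I * ((q:ℤ):ℂ) * p))
        = ∑' mn : ℤ × ℤ, T mn p := by
    intro p _
    rw [starProd, ← tsum_mul_right]
    apply tsum_congr
    intro mn
    rw [hT]
    show Complex.exp (Complex.I * p) ^ (mn.1 + mn.2) * fCoef (a (x + mn.1)) mn.2 *
        fCoef (b (x - mn.2)) mn.1 * Complex.exp (-(Complex.I * ((q:ℤ):ℂ) * p))
      = fCoef (a (x + mn.1)) mn.2 * fCoef (b (x - mn.2)) mn.1 *
        Complex.exp (((mn.1 + mn.2 - q : ℤ) : ℂ) * (Complex.I * p))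
    rw [show Complex.exp (Complex.I * p) ^ (mn.1 + mn.2) * fCoef (a (x + mn.1)) mn.2 *
        fCoef (b (x - mn.2)) mn.1 * Complex.exp (-(Complex.I * ((q:ℤ):ℂ) * p))
      = fCoef (a (x + mn.1)) mn.2 * fCoef (b (x - mn.2)) mn.1 *
        (Complex.exp (Complex.I * p) ^ (mn.1 + mn.2) * Complex.exp (-(Complex.I * ((q:ℤ):ℂ) * p))) from by ring]
    congr 1
    rw [← Complex.exp_int_mul, ← Complex.exp_add]
    congr 1
    push_cast
    ring
  -- the uniform bound
  have hnorm : ∀ (mn : ℤ × ℤ) (p : ℝ), ‖T mn p‖ = ‖fCoef (a (x + mn.1)) mn.2‖ * ‖fCoef (b (x - mn.2)) mn.1‖ := by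
    intro mn p
    rw [hT]
    show ‖fCoef (a (x + mn.1)) mn.2 * fCoef (b (x - mn.2)) mn.1 *
        Complex.exp (((mn.1 + mn.2 - q : ℤ) : ℂ) * (Complex.I * p))‖ = _
    rw [norm_mul, norm_mul]
    have : ‖Complex.exp (((mn.1 + mn.2 - q : ℤ) : ℂ) * (Complex.I * p))‖ = 1 := abs_exp_int_mul _ _
    rw [this, mul_one]
  have hgsum : Summable (fun mn : ℤ × ℤ => (Mb * s ^ mn.1.natAbs) * ((Ma * s ^ mn.2.natAbs) * (2*Real.pi))) := by
    apply Summable.mul_of_nonneg (summable_geo_int hs0 hs1 Mb)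
      ((summable_geo_int hs0 hs1 Ma).mul_right (2*Real.pi))
    · intro l; positivity
    · intro l; positivity
  have hbound : ∀ mn : ℤ × ℤ, ‖fCoef (a (x + mn.1)) mn.2‖ * ‖fCoef (b (x - mn.2)) mn.1‖
      ≤ (Mb * s ^ mn.1.natAbs) * (Ma * s ^ mn.2.natAbs) := by
    intro mn
    rw [mul_comm (Mb * s ^ mn.1.natAbs)]
    exact mul_le_mul (ha _ _) (hb _ _) (norm_nonneg _) (by positivity)
  -- rewrite fCoef as a set integral of the tsum
  rw [fCoef, intervalIntegral.integral_congr stepA, intervalIntegral.integral_of_le hle]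
  rw [MeasureTheory.integral_tsum]
  rotate_left
  · intro mn
    apply Continuous.aestronglyMeasurable
    fun_prop
  · apply ne_top_of_le_ne_top (b := ∑' mn : ℤ × ℤ, ENNReal.ofReal ((Mb * s ^ mn.1.natAbs) * ((Ma * s ^ mn.2.natAbs) * (2*Real.pi))))
    · rw [← ENNReal.ofReal_tsum_of_nonneg (fun mn => by positivity) hgsum]
      exact ENNReal.ofReal_ne_top
    · apply ENNReal.tsum_le_tsum
      intro mn
      calc ∫⁻ p in Set.Ioc (-Real.pi) Real.pi, ‖T mn p‖₊
          ≤ ∫⁻ _ in Set.Ioc (-Real.pi) Real.pi, ENNReal.ofReal ((Mb * s ^ mn.1.natAbs) * (Ma * s ^ mn.2.natAbs)) := by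
            apply MeasureTheory.lintegral_mono
            intro p
            show ((‖T mn p‖₊ : ℝ≥0∞)) ≤ ENNReal.ofReal ((Mb * s ^ mn.1.natAbs) * (Ma * s ^ mn.2.natAbs))
            rw [← enorm_eq_nnnorm, ← ofReal_norm]
            exact ENNReal.ofReal_le_ofReal ((le_of_eq (hnorm mn p)).trans (hbound mn))
        _ = ENNReal.ofReal ((Mb * s ^ mn.1.natAbs) * (Ma * s ^ mn.2.natAbs)) * volume (Set.Ioc (-Real.pi) Real.pi) := by
            rw [MeasureTheory.setLIntegral_const]
        _ ≤ ENNReal.ofReal ((Mb * s ^ mn.1.natAbs) * ((Ma * s ^ mn.2.natAbs) * (2*Real.pi))) := by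
            rw [Real.volume_Ioc, show Real.pi - -Real.pi = 2*Real.pi by ring,
              ← ENNReal.ofReal_mul (by positivity)]
            apply ENNReal.ofReal_le_ofReal
            apply le_of_eq; ring
  -- evaluate each integral
  have stepE : ∀ mn : ℤ × ℤ, (∫ p in Set.Ioc (-Real.pi) Real.pi, T mn p)
      = fCoef (a (x + mn.1)) mn.2 * fCoef (b (x - mn.2)) mn.1 *
        (if mn.1 + mn.2 - q = 0 then (2*(Real.pi:ℝ) : ℂ) else 0) := by
    intro mn
    rw [← intervalIntegral.integral_of_le hle]
    have : ∀ p : ℝ, T mn p = fCoef (a (x + mn.1)) mn.2 * fCoef (b (x - mn.2)) mn.1 *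
        Complex.exp (((mn.1 + mn.2 - q : ℤ) : ℂ) * (Complex.I * p)) := fun p => rfl
    simp_rw [this]
    rw [intervalIntegral.integral_const_mul, integral_exp_int]
  simp_rw [stepE]
  -- fold the (2π)⁻¹ factor in
  rw [← tsum_mul_left]
  have hπc : (2 * (Real.pi : ℂ)) ≠ 0 := by
    simp [Complex.ext_iff]
  have stepF : ∀ mn : ℤ × ℤ, (2 * (Real.pi : ℂ))⁻¹ *
      (fCoef (a (x + mn.1)) mn.2 * fCoef (b (x - mn.2)) mn.1 *
        (if mn.1 + mn.2 - q = 0 then (2*(Real.pi:ℝ) : ℂ) else 0))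
      = if mn.1 + mn.2 = q then fCoef (a (x + mn.1)) mn.2 * fCoef (b (x - mn.2)) mn.1 else 0 := by
    intro mn
    by_cases h : mn.1 + mn.2 = q
    · rw [if_pos (by omega), if_pos h]
      push_cast
      field_simp
    · rw [if_neg (by omega), if_neg h, mul_zero, mul_zero]
  simp_rw [stepF]
  -- reindex the diagonal sum
  have hinj : Function.Injective (fun m : ℤ => ((m, q - m) : ℤ × ℤ)) := by
    intro m1 m2 h
    exact congrArg Prod.fst h
  rw [← hinj.tsum_eq]
  · apply tsum_congr
    intro m
    simp only []
    rw [if_pos (by ring)]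
  · intro mn hmn
    rw [Function.mem_support] at hmn
    rcases eq_or_ne (mn.1 + mn.2) q with h | h
    · exact ⟨mn.1, by ext <;> simp <;> omega⟩
    · exact (hmn (if_neg h)).elim

lemma Lmat_starProd {a b : Symb} {Ma Mb s : ℝ} (hs0 : 0 < s) (hs1 : s < 1)
    (hMa : 0 ≤ Ma) (hMb : 0 ≤ Mb)
    (ha : ∀ k m, ‖fCoef (a k) m‖ ≤ Ma * s ^ m.natAbs)
    (hb : ∀ k m, ‖fCoef (b k) m‖ ≤ Mb * s ^ m.natAbs)
    (j k : ℤ) :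
    Lmat (starProd a b) j k = ∑' l : ℤ, Lmat a j l * Lmat b l k := by
  rw [Lmat, fCoef_starProd hs0 hs1 hMa hMb ha hb]
  rw [← (Equiv.subRight k).tsum_eq]
  apply tsum_congr
  intro l
  show fCoef (a (j + k + (l - k))) (j - k - (l - k)) * fCoef (b (j + k - (j - k - (l - k)))) (l - k)
      = Lmat a j l * Lmat b l k
  unfold Lmat
  rw [show j + k + (l - k) = j + l by ring, show j - k - (l - k) = j - l by ring,
    show j + k - (j - l) = l + k by ring]

lemma term_pos (a b : Symb) (j k l : ℕ) :
    Lmat a (j:ℤ) ((l:ℤ)+1) * Lmat b ((l:ℤ)+1) (k:ℤ) = Tmat a j (l+1) * Tmat b (l+1) k := by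
  unfold Tmat
  push_cast
  ring

lemma Hmat_eq_Lmat (a : Symb) (j l : ℕ) :
    Hmat a j (l+1) = Lmat a (j:ℤ) (-(l:ℤ)) := by
  unfold Hmat Lmat
  rw [show (j:ℤ) - ((l+1:ℕ):ℤ) + 1 = (j:ℤ) + -(l:ℤ) by push_cast; ring,
    show (j:ℤ) + ((l+1:ℕ):ℤ) - 1 = (j:ℤ) - -(l:ℤ) by push_cast; ring]

lemma Hmat_reflect_eq_Lmat (b : Symb) (k l : ℕ) :
    Hmat (reflect b) (l+1) k = Lmat b (-(l:ℤ)) (k:ℤ) := by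
  unfold Hmat
  rw [fCoef_reflect]
  unfold Lmat
  rw [show 2 - (((l+1:ℕ):ℤ) - (k:ℤ) + 1) = -(l:ℤ) + (k:ℤ) by push_cast; ring,
    show -(((l+1:ℕ):ℤ) + (k:ℤ) - 1) = -(l:ℤ) - (k:ℤ) by push_cast; ring]

end StarTH

/-- **Star Toeplitz–Hankel decomposition** (Lemma 3.2 of the paper):
`T(a⋆b) = T(a)T(b) + H(a)H(b^∼)`, stated entrywise on `ℓ²(ℕ)` with absolutely
convergent series. -/
theorem star_toeplitz_hankel (a b : Symb) (ha : memV a) (hb : memV b) :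
    ∀ j k : ℕ, 1 ≤ j → 1 ≤ k →
      Summable (fun l : ℕ => ‖Tmat a j (l + 1) * Tmat b (l + 1) k‖) ∧
      Summable (fun l : ℕ => ‖Hmat a j (l + 1) * Hmat (reflect b) (l + 1) k‖) ∧
      Tmat (starProd a b) j k =
        (∑' l : ℕ, Tmat a j (l + 1) * Tmat b (l + 1) k) +
          ∑' l : ℕ, Hmat a j (l + 1) * Hmat (reflect b) (l + 1) k := by
  classical
  obtain ⟨ρa, hρa, haa⟩ := ha
  obtain ⟨ρb, hρb, hbb⟩ := hb
  obtain ⟨Ma, sa, hMa0, hsa0, hsa1, hda⟩ := StarTH.decay hρa haa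
  obtain ⟨Mb, sb, hMb0, hsb0, hsb1, hdb⟩ := StarTH.decay hρb hbb
  set s := max sa sb with hs
  have hs0 : 0 < s := lt_max_of_lt_left hsa0
  have hs1 : s < 1 := max_lt hsa1 hsb1
  have hda' : ∀ k m, ‖fCoef (a k) m‖ ≤ Ma * s ^ m.natAbs := fun k m =>
    (hda k m).trans (mul_le_mul_of_nonneg_left (pow_le_pow_left₀ hsa0.le (le_max_left _ _) _) hMa0)
  have hdb' : ∀ k m, ‖fCoef (b k) m‖ ≤ Mb * s ^ m.natAbs := fun k m =>
    (hdb k m).trans (mul_le_mul_of_nonneg_left (pow_le_pow_left₀ hsb0.le (le_max_right _ _) _) hMb0)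
  intro j k _ _
  set f : ℤ → ℂ := fun l => Lmat a (j:ℤ) l * Lmat b l (k:ℤ) with hf
  have hMa' : 0 ≤ Ma := le_trans (norm_nonneg (fCoef (a 0) 0)) (by simpa using hda' 0 0)
  have hMb' : 0 ≤ Mb := le_trans (norm_nonneg (fCoef (b 0) 0)) (by simpa using hdb' 0 0)
  have hcmp : ∀ l : ℤ, ‖f l‖ ≤ (Ma * Mb) * s ^ ((j:ℤ) - l).natAbs := by
    intro l
    rw [hf, norm_mul]
    calc ‖Lmat a (j:ℤ) l‖ * ‖Lmat b l (k:ℤ)‖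
        ≤ (Ma * s ^ ((j:ℤ)-l).natAbs) * (Mb * s ^ ((l - (k:ℤ)).natAbs)) :=
          mul_le_mul (hda' _ _) (hdb' _ _) (norm_nonneg _) (by positivity)
      _ ≤ (Ma * s ^ ((j:ℤ)-l).natAbs) * (Mb * 1) := by
          apply mul_le_mul_of_nonneg_left _ (by positivity)
          exact mul_le_mul_of_nonneg_left (pow_le_one₀ hs0.le hs1.le) hMb'
      _ = (Ma * Mb) * s ^ ((j:ℤ)-l).natAbs := by ring
  have hgs : Summable (fun l : ℤ => (Ma * Mb) * s ^ ((j:ℤ) - l).natAbs) := by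
    have h1 : Summable (fun t : ℤ => (Ma*Mb) * s ^ t.natAbs) := StarTH.summable_geo_int hs0 hs1 _
    have := (Equiv.subLeft (j:ℤ)).summable_iff.mpr h1
    simpa [Function.comp_def] using this
  have hSZ : Summable (fun l : ℤ => ‖f l‖) :=
    Summable.of_nonneg_of_le (fun l => norm_nonneg _) hcmp hgs
  have hS : Summable f := hSZ.of_norm
  have hinj1 : Function.Injective (fun l : ℕ => (l:ℤ)+1) := fun x y h => by
    simp only at h; omega
  have hinj2 : Function.Injective (fun l : ℕ => -(l:ℤ)) := fun x y h => by
    simp only at h; omega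
  have hSZ1 : Summable (fun l : ℕ => ‖f ((l:ℤ)+1)‖) := by
    have := hSZ.comp_injective hinj1; simpa [Function.comp_def] using this
  have hSZ2 : Summable (fun l : ℕ => ‖f (-(l:ℤ))‖) := by
    have := hSZ.comp_injective hinj2; simpa [Function.comp_def] using this
  have hS1 : Summable (fun l : ℕ => f ((l:ℤ)+1)) := hSZ1.of_norm
  have hS2 : Summable (fun l : ℕ => f (-(l:ℤ))) := hSZ2.of_norm
  have hfpos : ∀ l : ℕ, f ((l:ℤ)+1) = Tmat a j (l+1) * Tmat b (l+1) k := fun l =>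
    StarTH.term_pos a b j k l
  have hfneg : ∀ l : ℕ, f (-(l:ℤ)) = Hmat a j (l+1) * Hmat (reflect b) (l+1) k := fun l => by
    rw [hf]
    show Lmat a (j:ℤ) (-(l:ℤ)) * Lmat b (-(l:ℤ)) (k:ℤ) = _
    rw [← StarTH.Hmat_eq_Lmat, ← StarTH.Hmat_reflect_eq_Lmat]
  refine ⟨hSZ1.congr (fun l => by rw [hfpos l]), hSZ2.congr (fun l => by rw [hfneg l]), ?_⟩
  have hTL : Tmat (starProd a b) j k = Lmat (starProd a b) (j:ℤ) (k:ℤ) := rfl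
  rw [hTL, StarTH.Lmat_starProd hs0 hs1 hMa' hMb' hda' hdb']
  have hshift : (∑' l : ℤ, f l) = ∑' l : ℤ, f (l+1) := ((Equiv.addRight (1:ℤ)).tsum_eq f).symm
  have hsplit : (∑' l : ℤ, f (l+1)) = (∑' n : ℕ, f ((n:ℤ)+1)) + ∑' n : ℕ, f (-((n:ℤ)+1)+1) :=
    tsum_of_nat_of_neg_add_one (f := fun l : ℤ => f (l+1)) hS1
      (hS2.congr (fun n => by congr 1; ring))
  have e1 : (∑' n : ℕ, f ((n:ℤ)+1)) = ∑' l : ℕ, Tmat a j (l+1) * Tmat b (l+1) k :=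
    tsum_congr hfpos
  have e2 : (∑' n : ℕ, f (-((n:ℤ)+1)+1)) = ∑' l : ℕ, Hmat a j (l+1) * Hmat (reflect b) (l+1) k :=
    tsum_congr (fun n => by rw [show -((n:ℤ)+1)+1 = -(n:ℤ) by ring, hfneg n])
  rw [show (∑' l : ℤ, Lmat a (j:ℤ) l * Lmat b l (k:ℤ)) = ∑' l : ℤ, f l from rfl,
    hshift, hsplit, e1, e2]

end
end

section
/- If a₋ ∈ V is a − symbol, c₊ ∈ V is a + symbol, and b ∈ V is arbitrary, then T(a₋ ⋆ b ⋆ c₊) = T(a₋)T(b)T(c₊) as operators on ℓ²(ℕ); in particular T(a₋ ⋆ b) = T(a₋)T(b) and T(b ⋆ c₊) = T(b)T(c₊). -/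
open Filter MeasureTheory

noncomputable section

-- ### Auxiliary lemmas for the proof of `star_toeplitz_minus_plus_factorization`

set_option maxHeartbeats 1000000 in
lemma aux_integral_exp_I_int (t : ℤ) :
    (∫ p in (-Real.pi)..Real.pi, Complex.exp (Complex.I * (t : ℂ) * (p : ℂ))) =
      if t = 0 then (2 * Real.pi : ℂ) else 0 := by
  rcases eq_or_ne t 0 with rfl | ht
  · simp [two_mul]
  · rw [if_neg ht]
    have hc : (Complex.I * (t : ℂ)) ≠ 0 := by
      simp [Complex.I_ne_zero, Complex.ext_iff]
      exact_mod_cast ht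
    have := integral_exp_mul_complex (a := -Real.pi) (b := Real.pi) hc
    simp only [mul_assoc] at this ⊢
    rw [this]
    have key : Complex.exp (Complex.I * ((t : ℂ) * (Real.pi : ℂ)))
        = Complex.exp (Complex.I * ((t : ℂ) * ((-Real.pi : ℝ) : ℂ))) := by
      rw [show Complex.I * ((t : ℂ) * ((-Real.pi : ℝ) : ℂ)) =
        Complex.I * ((t : ℂ) * (Real.pi : ℂ)) - (t : ℂ) * (2 * Real.pi * Complex.I) by
          push_cast; ring, Complex.exp_sub, Complex.exp_int_mul_two_pi_mul_I, div_one]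
    rw [key, sub_self, zero_div]

set_option maxHeartbeats 1000000 in
lemma aux_circle_to_interval (f : ℂ → ℂ) (m : ℤ) (R : ℝ) (hR : 0 < R) :
    (∮ z in C(0, R), f z * z ^ (-m - 1)) =
      Complex.I * (R : ℂ) ^ (-m) *
        ∫ p in (-Real.pi)..Real.pi,
          f ((R : ℂ) * Complex.exp (Complex.I * (p : ℂ))) *
            Complex.exp (-(Complex.I * (m : ℂ) * (p : ℂ))) := by
  have hper : Function.Periodic
      (fun θ : ℝ => deriv (circleMap 0 R) θ • (f (circleMap 0 R θ) * circleMap 0 R θ ^ (-m - 1)))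
      (2 * Real.pi) := by
    intro θ
    simp only [deriv_circleMap, periodic_circleMap 0 R θ]
  have h1 : (∮ z in C(0, R), f z * z ^ (-m - 1)) =
      ∫ θ in (-Real.pi)..Real.pi,
        deriv (circleMap 0 R) θ • (f (circleMap 0 R θ) * circleMap 0 R θ ^ (-m - 1)) := by
    rw [circleIntegral]
    have := hper.intervalIntegral_add_eq 0 (-Real.pi)
    rw [zero_add] at this
    rw [this, show -Real.pi + 2 * Real.pi = Real.pi by ring]
  rw [h1, ← intervalIntegral.integral_const_mul]
  apply intervalIntegral.integral_congr
  intro θ _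
  simp only [deriv_circleMap, smul_eq_mul]
  have hc : circleMap 0 R θ ≠ 0 := by
    simp [circleMap_zero, hR.ne', Complex.exp_ne_zero]
  have hz : circleMap 0 R θ * Complex.I * (f (circleMap 0 R θ) * circleMap 0 R θ ^ (-m - 1)) =
      Complex.I * (circleMap 0 R θ ^ (-m)) * f (circleMap 0 R θ) := by
    rw [show (-m : ℤ) = (-m - 1) + 1 by ring, zpow_add_one₀ hc]
    ring
  rw [hz, circleMap_zero, mul_zpow]
  have he : Complex.exp (θ * Complex.I) ^ (-m) = Complex.exp (-(Complex.I * (m : ℂ) * (θ : ℂ))) := by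
    rw [← Complex.exp_int_mul]
    congr 1
    push_cast
    ring
  rw [he]
  have harg : (θ : ℂ) * Complex.I = Complex.I * (θ : ℂ) := by ring
  rw [harg]
  ring

lemma aux_annulus_sub {ρ rr RR : ℝ} (h1 : ρ < rr) (h2 : RR < ρ⁻¹) :
    Metric.closedBall (0 : ℂ) RR \ Metric.ball (0 : ℂ) rr ⊆ annulus ρ := by
  intro z hz
  obtain ⟨hz1, hz2⟩ := hz
  rw [Metric.mem_closedBall, dist_zero_right] at hz1
  rw [Metric.mem_ball, dist_zero_right, not_lt] at hz2
  exact ⟨h1.trans_le hz2, lt_of_le_of_lt hz1 h2⟩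

set_option maxHeartbeats 1000000 in
lemma aux_fCoef_eq_radius (f : ℂ → ℂ) (m : ℤ) {ρ R : ℝ} (hρ0 : 0 < ρ) (hρ1 : ρ < 1)
    (hf : AnalyticOnNhd ℂ f (annulus ρ)) (hR1 : ρ < R) (hR2 : R < ρ⁻¹) :
    fCoef f m = (2 * (Real.pi : ℂ))⁻¹ * ((R : ℂ) ^ (-m) *
      ∫ p in (-Real.pi)..Real.pi,
        f ((R : ℂ) * Complex.exp (Complex.I * (p : ℂ))) *
          Complex.exp (-(Complex.I * (m : ℂ) * (p : ℂ)))) := by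
  have hR0 : 0 < R := hρ0.trans hR1
  have h1ρ : (1 : ℝ) < ρ⁻¹ := (one_lt_inv₀ hρ0).mpr hρ1
  set g : ℂ → ℂ := fun z => f z * z ^ (-m - 1) with hg
  have hcont : ∀ {rr RR : ℝ}, ρ < rr → RR < ρ⁻¹ →
      ContinuousOn g (Metric.closedBall (0 : ℂ) RR \ Metric.ball (0 : ℂ) rr) := by
    intro rr RR h1 h2
    have hsub := aux_annulus_sub h1 h2
    apply ContinuousOn.mul ((hf.continuousOn).mono hsub)
    intro z hz
    have hz0 : z ≠ 0 := by
      intro h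
      have := (hsub hz).1
      simp [h] at this
      exact absurd (this) (not_lt.mpr hρ0.le)
    exact (continuousAt_zpow₀ z _ (Or.inl hz0)).continuousWithinAt
  have hdiff : ∀ {rr RR : ℝ}, ρ < rr → RR < ρ⁻¹ →
      ∀ z ∈ (Metric.ball (0 : ℂ) RR \ Metric.closedBall (0 : ℂ) rr) \ (∅ : Set ℂ),
        DifferentiableAt ℂ g z := by
    intro rr RR h1 h2 z hz
    obtain ⟨⟨hz1, hz2⟩, -⟩ := hz
    rw [Metric.mem_ball, dist_zero_right] at hz1
    rw [Metric.mem_closedBall, dist_zero_right, not_le] at hz2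
    have hzann : z ∈ annulus ρ := ⟨h1.trans hz2, hz1.trans h2⟩
    have hz0 : z ≠ 0 := by
      intro h; rw [h] at hzann; simp [annulus] at hzann
      exact absurd hzann.1 (not_lt.mpr hρ0.le)
    exact ((hf z hzann).differentiableAt).mul (differentiableAt_zpow.mpr (Or.inl hz0))
  have key : (∮ z in C(0, (1:ℝ)), g z) = ∮ z in C(0, R), g z := by
    rcases le_total R 1 with h | h
    · exact Complex.circleIntegral_eq_of_differentiable_on_annulus_off_countable hR0 h
        Set.countable_empty (hcont hR1 h1ρ) (hdiff hR1 h1ρ)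
    · exact (Complex.circleIntegral_eq_of_differentiable_on_annulus_off_countable one_pos h
        Set.countable_empty (hcont hρ1 hR2) (hdiff hρ1 hR2)).symm
  rw [aux_circle_to_interval f m 1 one_pos, aux_circle_to_interval f m R hR0] at key
  simp only [Complex.ofReal_one, one_zpow, mul_one, one_mul] at key
  rw [mul_assoc] at key
  have key2 := mul_left_cancel₀ Complex.I_ne_zero key
  rw [fCoef, key2]

lemma aux_norm_exp_neg_Imp (m : ℤ) (p : ℝ) :
    ‖Complex.exp (-(Complex.I * (m : ℂ) * (p : ℂ)))‖ = 1 := by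
  rw [Complex.norm_exp]
  simp

lemma aux_mem_annulus_of_radius {ρ R : ℝ} (hρ0 : 0 < ρ) (hR1 : ρ < R) (hR2 : R < ρ⁻¹) (p : ℝ) :
    ((R : ℂ) * Complex.exp (Complex.I * (p : ℂ))) ∈ annulus ρ := by
  have : ‖(R : ℂ) * Complex.exp (Complex.I * (p : ℂ))‖ = R := by
    rw [norm_mul, Complex.norm_exp]
    simp [abs_of_pos (hρ0.trans hR1)]
  exact ⟨by rw [this]; exact hR1, by rw [this]; exact hR2⟩

set_option maxHeartbeats 1000000 in
lemma aux_fCoef_decay {ρ r : ℝ} (hρ0 : 0 < ρ) (hr : ρ < r) (hr1 : r < 1) (f : ℂ → ℂ)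
    (hf : AnalyticOnNhd ℂ f (annulus ρ)) {M : ℝ} (hM : ∀ z ∈ annulus ρ, ‖f z‖ ≤ M) (m : ℤ) :
    ‖fCoef f m‖ ≤ M * r ^ m.natAbs := by
  have hρ1 : ρ < 1 := hr.trans hr1
  have hr0 : 0 < r := hρ0.trans hr
  have h1ρ : (1 : ℝ) < ρ⁻¹ := (one_lt_inv₀ hρ0).mpr hρ1
  have hπ : (0 : ℝ) < Real.pi := Real.pi_pos
  obtain ⟨R, hR1, hR2, hRm⟩ : ∃ R : ℝ, ρ < R ∧ R < ρ⁻¹ ∧ R ^ (-m) = r ^ m.natAbs := by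
    rcases le_or_gt 0 m with h | h
    · refine ⟨r⁻¹, lt_trans hρ1 ((one_lt_inv₀ hr0).mpr hr1), ?_, ?_⟩
      · exact (inv_lt_inv₀ (hρ0.trans hr) hρ0).mpr hr
      · rw [zpow_neg, inv_zpow, inv_inv, ← zpow_natCast r m.natAbs, Int.natAbs_of_nonneg h]
    · refine ⟨r, hr, lt_trans hr1 h1ρ, ?_⟩
      rw [← zpow_natCast r m.natAbs, ← Int.abs_eq_natAbs, abs_of_neg h]
  have hR0 : 0 < R := hρ0.trans hR1
  rw [aux_fCoef_eq_radius f m hρ0 hρ1 hf hR1 hR2]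
  have hbound : ‖∫ p in (-Real.pi)..Real.pi,
      f ((R : ℂ) * Complex.exp (Complex.I * (p : ℂ))) *
        Complex.exp (-(Complex.I * (m : ℂ) * (p : ℂ)))‖ ≤ M * (2 * Real.pi) := by
    have := intervalIntegral.norm_integral_le_of_norm_le_const (a := -Real.pi) (b := Real.pi)
      (C := M)
      (f := fun p : ℝ => f ((R : ℂ) * Complex.exp (Complex.I * (p : ℂ))) *
        Complex.exp (-(Complex.I * (m : ℂ) * (p : ℂ))))
      (fun p _ => by
        rw [norm_mul, aux_norm_exp_neg_Imp, mul_one]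
        exact hM _ (aux_mem_annulus_of_radius hρ0 hR1 hR2 p))
    calc _ ≤ M * |Real.pi - -Real.pi| := this
    _ = M * (2 * Real.pi) := by rw [abs_of_pos (by linarith)]; ring_nf
  rw [norm_mul, norm_mul]
  have h2π : ‖(2 * (Real.pi : ℂ))⁻¹‖ = (2 * Real.pi)⁻¹ := by
    rw [norm_inv]
    congr 1
    rw [show ((2:ℂ) * (Real.pi:ℂ)) = ((2 * Real.pi : ℝ) : ℂ) by push_cast; ring,
      Complex.norm_real, Real.norm_eq_abs, abs_of_pos (by linarith)]
  have hRn : ‖(R : ℂ) ^ (-m)‖ = r ^ m.natAbs := by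
    rw [norm_zpow, Complex.norm_real, Real.norm_eq_abs, abs_of_pos hR0, hRm]
  rw [h2π, hRn]
  have hM0 : 0 ≤ M := le_trans (norm_nonneg (f 1)) (hM 1 (by
    constructor <;> simp [hρ1, h1ρ]))
  calc (2 * Real.pi)⁻¹ * (r ^ m.natAbs * ‖_‖) ≤
      (2 * Real.pi)⁻¹ * (r ^ m.natAbs * (M * (2 * Real.pi))) := by
        apply mul_le_mul_of_nonneg_left _ (by positivity)
        exact mul_le_mul_of_nonneg_left hbound (by positivity)
  _ = M * r ^ m.natAbs := by field_simp

lemma aux_summable_geo_int {r : ℝ} (hr0 : 0 < r) (hr1 : r < 1) :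
    Summable (fun n : ℤ => r ^ n.natAbs) := by
  apply Summable.of_nat_of_neg
  · simpa using summable_geometric_of_lt_one hr0.le hr1
  · simpa using summable_geometric_of_lt_one hr0.le hr1

set_option maxHeartbeats 1600000 in
lemma aux_fCoef_starProd (a b : Symb) {r Ma Mb : ℝ} (hr0 : 0 < r) (hr1 : r < 1)
    (hMa : 0 ≤ Ma) (hMb : 0 ≤ Mb)
    (ha : ∀ k m, ‖fCoef (a k) m‖ ≤ Ma * r ^ m.natAbs)
    (hb : ∀ k m, ‖fCoef (b k) m‖ ≤ Mb * r ^ m.natAbs)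
    (x s : ℤ) :
    fCoef (starProd a b x) s =
      ∑' n : ℤ, fCoef (a (x + (s - n))) n * fCoef (b (x - n)) (s - n) := by
  have hπ : (0 : ℝ) < Real.pi := Real.pi_pos
  set A : ℤ × ℤ → ℂ := fun mn => fCoef (a (x + mn.1)) mn.2 * fCoef (b (x - mn.2)) mn.1 with hA
  have hAsum : Summable (fun mn : ℤ × ℤ => ‖A mn‖) := by
    have hgeo : Summable (fun mn : ℤ × ℤ =>
        (Mb * r ^ mn.1.natAbs) * (Ma * r ^ mn.2.natAbs)) :=
      Summable.mul_of_nonneg ((aux_summable_geo_int hr0 hr1).mul_left Mb)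
        ((aux_summable_geo_int hr0 hr1).mul_left Ma)
        (fun n => by positivity) (fun n => by positivity)
    apply Summable.of_nonneg_of_le (fun mn => norm_nonneg _) _ hgeo
    intro mn
    rw [hA, norm_mul]
    calc ‖fCoef (a (x + mn.1)) mn.2‖ * ‖fCoef (b (x - mn.2)) mn.1‖
        ≤ (Ma * r ^ mn.2.natAbs) * (Mb * r ^ mn.1.natAbs) :=
          mul_le_mul (ha _ _) (hb _ _) (norm_nonneg _) (by positivity)
      _ = (Mb * r ^ mn.1.natAbs) * (Ma * r ^ mn.2.natAbs) := by ring
  have hpt : ∀ p : ℝ,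
      starProd a b x (Complex.exp (Complex.I * (p : ℂ))) *
          Complex.exp (-(Complex.I * (s : ℂ) * (p : ℂ))) =
        ∑' mn : ℤ × ℤ, A mn *
          Complex.exp (Complex.I * ((mn.1 + mn.2 - s : ℤ) : ℂ) * (p : ℂ)) := by
    intro p
    rw [starProd, ← tsum_mul_right]
    congr 1
    funext mn
    have hz : Complex.exp (Complex.I * (p : ℂ)) ^ (mn.1 + mn.2) =
        Complex.exp (((mn.1 + mn.2 : ℤ) : ℂ) * (Complex.I * (p : ℂ))) :=
      (Complex.exp_int_mul _ _).symm
    rw [hz]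
    have hcomb : Complex.exp (((mn.1 + mn.2 : ℤ) : ℂ) * (Complex.I * (p : ℂ))) *
        Complex.exp (-(Complex.I * (s : ℂ) * (p : ℂ))) =
        Complex.exp (Complex.I * ((mn.1 + mn.2 - s : ℤ) : ℂ) * (p : ℂ)) := by
      rw [← Complex.exp_add]
      congr 1
      push_cast
      ring
    calc Complex.exp (((mn.1 + mn.2 : ℤ) : ℂ) * (Complex.I * (p : ℂ))) *
          fCoef (a (x + mn.1)) mn.2 * fCoef (b (x - mn.2)) mn.1 *
          Complex.exp (-(Complex.I * (s : ℂ) * (p : ℂ)))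
        = A mn * (Complex.exp (((mn.1 + mn.2 : ℤ) : ℂ) * (Complex.I * (p : ℂ))) *
            Complex.exp (-(Complex.I * (s : ℂ) * (p : ℂ)))) := by rw [hA]; ring
      _ = A mn * Complex.exp (Complex.I * ((mn.1 + mn.2 - s : ℤ) : ℂ) * (p : ℂ)) := by
            rw [hcomb]
  have hle : (-Real.pi : ℝ) ≤ Real.pi := by linarith
  have hswap : (∫ p in (-Real.pi)..Real.pi,
      ∑' mn : ℤ × ℤ, A mn * Complex.exp (Complex.I * ((mn.1 + mn.2 - s : ℤ) : ℂ) * (p : ℂ))) =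
      ∑' mn : ℤ × ℤ, ∫ p in (-Real.pi)..Real.pi,
        A mn * Complex.exp (Complex.I * ((mn.1 + mn.2 - s : ℤ) : ℂ) * (p : ℂ)) := by
    rw [intervalIntegral.integral_of_le hle]
    have hcont : ∀ mn : ℤ × ℤ, Continuous (fun p : ℝ =>
        A mn * Complex.exp (Complex.I * ((mn.1 + mn.2 - s : ℤ) : ℂ) * (p : ℂ))) := by
      intro mn
      exact continuous_const.mul (Complex.continuous_exp.comp (by continuity))
    have hint : ∀ mn : ℤ × ℤ, IntegrableOn (fun p : ℝ =>
        A mn * Complex.exp (Complex.I * ((mn.1 + mn.2 - s : ℤ) : ℂ) * (p : ℂ)))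
        (Set.Ioc (-Real.pi) Real.pi) := fun mn => (hcont mn).integrableOn_Ioc
    have hnorm : ∀ mn : ℤ × ℤ, (∫ p in Set.Ioc (-Real.pi) Real.pi,
        ‖A mn * Complex.exp (Complex.I * ((mn.1 + mn.2 - s : ℤ) : ℂ) * (p : ℂ))‖) =
        (2 * Real.pi) * ‖A mn‖ := by
      intro mn
      have : ∀ p : ℝ, ‖A mn * Complex.exp (Complex.I * ((mn.1 + mn.2 - s : ℤ) : ℂ) * (p : ℂ))‖
          = ‖A mn‖ := by
        intro p
        rw [norm_mul, Complex.norm_exp]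
        simp
      rw [MeasureTheory.setIntegral_congr_fun measurableSet_Ioc (fun p _ => this p)]
      rw [MeasureTheory.setIntegral_const, MeasureTheory.measureReal_def, Real.volume_Ioc, smul_eq_mul,
        ENNReal.toReal_ofReal (by linarith)]
      ring
    rw [← MeasureTheory.integral_tsum_of_summable_integral_norm hint
      (by simp only [hnorm]; exact hAsum.mul_left _)]
    exact tsum_congr fun mn => (intervalIntegral.integral_of_le hle).symm
  have hpic : (2 * (Real.pi : ℂ)) ≠ 0 := by
    simp [Complex.ext_iff]
  rw [fCoef, intervalIntegral.integral_congr (fun p _ => hpt p), hswap]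
  have hval : ∀ mn : ℤ × ℤ, (∫ p in (-Real.pi)..Real.pi,
      A mn * Complex.exp (Complex.I * ((mn.1 + mn.2 - s : ℤ) : ℂ) * (p : ℂ))) =
      A mn * (if mn.1 + mn.2 - s = 0 then (2 * Real.pi : ℂ) else 0) := by
    intro mn
    rw [intervalIntegral.integral_const_mul, aux_integral_exp_I_int]
  rw [tsum_congr hval, ← tsum_mul_left]
  have hite : ∀ mn : ℤ × ℤ,
      (2 * (Real.pi : ℂ))⁻¹ * (A mn * (if mn.1 + mn.2 - s = 0 then (2 * Real.pi : ℂ) else 0)) =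
      (if mn.1 + mn.2 = s then A mn else 0) := by
    intro mn
    by_cases h : mn.1 + mn.2 = s
    · rw [if_pos (by omega), if_pos h]
      field_simp
    · rw [if_neg (by omega), if_neg h, mul_zero, mul_zero]
  rw [tsum_congr hite]
  apply tsum_eq_tsum_of_ne_zero_bij
    (i := fun n : Function.support (fun n : ℤ => A (s - n, n)) => ((s - (n : ℤ), (n : ℤ)) : ℤ × ℤ))
  · intro n n' h
    simp only [Prod.mk.injEq] at h
    exact Subtype.ext h.2
  · intro mn hmn
    simp only [Function.mem_support, ne_eq] at hmn
    by_cases h : mn.1 + mn.2 = s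
    · have hA0 : A (s - mn.2, mn.2) ≠ 0 := by
        rw [show s - mn.2 = mn.1 by omega]
        intro h0
        apply hmn
        rw [if_pos h, h0]
      exact ⟨⟨mn.2, hA0⟩, by simp [Prod.ext_iff]; omega⟩
    · exact absurd (if_neg h) hmn
  · intro n
    rw [if_pos (by omega)]

set_option maxHeartbeats 1000000 in
lemma aux_Lmat_starProd (a b : Symb) {r Ma Mb : ℝ} (hr0 : 0 < r) (hr1 : r < 1)
    (hMa : 0 ≤ Ma) (hMb : 0 ≤ Mb)
    (ha : ∀ k m, ‖fCoef (a k) m‖ ≤ Ma * r ^ m.natAbs)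
    (hb : ∀ k m, ‖fCoef (b k) m‖ ≤ Mb * r ^ m.natAbs)
    (j k : ℤ) :
    Lmat (starProd a b) j k = ∑' l : ℤ, Lmat a j l * Lmat b l k := by
  rw [Lmat, aux_fCoef_starProd a b hr0 hr1 hMa hMb ha hb (j + k) (j - k)]
  rw [← (Equiv.subLeft j).tsum_eq]
  refine tsum_congr fun l => ?_
  simp only [Equiv.subLeft_apply]
  rw [show j + k + (j - k - (j - l)) = j + l by ring,
    show j + k - (j - l) = l + k by ring,
    show j - k - (j - l) = l - k by ring]
  rfl

set_option maxHeartbeats 1000000 in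
lemma aux_fCoef_starProd_decay (a b : Symb) {r Ma Mb : ℝ} (hr0 : 0 < r) (hr1 : r < 1)
    (hMa : 0 ≤ Ma) (hMb : 0 ≤ Mb)
    (ha : ∀ k m, ‖fCoef (a k) m‖ ≤ Ma * (r * r) ^ m.natAbs)
    (hb : ∀ k m, ‖fCoef (b k) m‖ ≤ Mb * (r * r) ^ m.natAbs) (x s : ℤ) :
    ‖fCoef (starProd a b x) s‖ ≤
      (Ma * Mb * ∑' n : ℤ, r ^ n.natAbs) * r ^ s.natAbs := by
  have hrr0 : 0 < r * r := by positivity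
  have hrr1 : r * r < 1 := by nlinarith
  have hterm : ∀ n : ℤ, ‖fCoef (a (x + (s - n))) n * fCoef (b (x - n)) (s - n)‖ ≤
      (Ma * Mb * r ^ s.natAbs) * r ^ n.natAbs := by
    intro n
    have h1 : ‖fCoef (a (x + (s - n))) n * fCoef (b (x - n)) (s - n)‖ ≤
        (Ma * (r * r) ^ n.natAbs) * (Mb * (r * r) ^ (s - n).natAbs) := by
      rw [norm_mul]
      exact mul_le_mul (ha _ _) (hb _ _) (norm_nonneg _) (by positivity)
    have htri : s.natAbs ≤ n.natAbs + (s - n).natAbs := by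
      have := Int.natAbs_add_le n (s - n)
      omega
    have h2 : (r * r) ^ n.natAbs * (r * r) ^ (s - n).natAbs ≤ r ^ s.natAbs * r ^ n.natAbs := by
      rw [← pow_add, ← pow_add, show r * r = r ^ 2 by ring, ← pow_mul]
      exact pow_le_pow_of_le_one hr0.le hr1.le (by omega)
    calc ‖fCoef (a (x + (s - n))) n * fCoef (b (x - n)) (s - n)‖
        ≤ (Ma * (r * r) ^ n.natAbs) * (Mb * (r * r) ^ (s - n).natAbs) := h1
      _ = (Ma * Mb) * ((r * r) ^ n.natAbs * (r * r) ^ (s - n).natAbs) := by ring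
      _ ≤ (Ma * Mb) * (r ^ s.natAbs * r ^ n.natAbs) := by
          exact mul_le_mul_of_nonneg_left h2 (by positivity)
      _ = (Ma * Mb * r ^ s.natAbs) * r ^ n.natAbs := by ring
  have hgeo := aux_summable_geo_int hr0 hr1
  have hsum : Summable (fun n : ℤ =>
      ‖fCoef (a (x + (s - n))) n * fCoef (b (x - n)) (s - n)‖) :=
    Summable.of_nonneg_of_le (fun n => norm_nonneg _) hterm
      (hgeo.mul_left (Ma * Mb * r ^ s.natAbs))
  rw [aux_fCoef_starProd a b hrr0 hrr1 hMa hMb ha hb x s]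
  calc ‖∑' n : ℤ, fCoef (a (x + (s - n))) n * fCoef (b (x - n)) (s - n)‖
      ≤ ∑' n : ℤ, ‖fCoef (a (x + (s - n))) n * fCoef (b (x - n)) (s - n)‖ :=
        norm_tsum_le_tsum_norm hsum
    _ ≤ ∑' n : ℤ, (Ma * Mb * r ^ s.natAbs) * r ^ n.natAbs :=
        Summable.tsum_le_tsum hterm hsum (hgeo.mul_left _)
    _ = (Ma * Mb * r ^ s.natAbs) * ∑' n : ℤ, r ^ n.natAbs := tsum_mul_left
    _ = (Ma * Mb * ∑' n : ℤ, r ^ n.natAbs) * r ^ s.natAbs := by ring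

lemma aux_tsum_shift_pos {f : ℤ → ℂ} (h : ∀ l : ℤ, l ≤ 0 → f l = 0) :
    ∑' l : ℤ, f l = ∑' l : ℕ, f ((l : ℤ) + 1) := by
  apply tsum_eq_tsum_of_ne_zero_bij
    (i := fun l : Function.support (fun l : ℕ => f ((l : ℤ) + 1)) => ((l : ℤ) + 1))
  · intro u v huv
    simp only [add_left_inj, Nat.cast_inj] at huv
    exact Subtype.ext (by exact_mod_cast huv)
  · intro l hl
    have hl1 : 1 ≤ l := by
      by_contra hc
      exact hl (h l (by omega))
    refine ⟨⟨(l - 1).toNat, ?_⟩, ?_⟩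
    · simp only [Function.mem_support, ne_eq]
      rw [show (((l - 1).toNat : ℤ) + 1) = l by omega]
      exact hl
    · simp only
      omega
  · intro l
    rfl

lemma aux_annulus_mono {ρ ρ' : ℝ} (h0 : 0 < ρ) (h : ρ ≤ ρ') : annulus ρ' ⊆ annulus ρ := by
  intro z hz
  exact ⟨lt_of_le_of_lt h hz.1, lt_of_lt_of_le hz.2 (by
    apply inv_anti₀ h0 h)⟩


set_option maxHeartbeats 1600000 in
/-- `T(a₋ ⋆ b ⋆ c₊) = T(a₋) T(b) T(c₊)` for a `-` symbol `a₋`, a `+` symbol `c₊` and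
arbitrary `b ∈ V`, together with the two-factor special cases (Lemma 3.4 of the paper);
stated entrywise on `ℓ²(ℕ)`. -/
theorem star_toeplitz_minus_plus_factorization
    (am b cp : Symb) (ham : memV am) (hb : memV b) (hcp : memV cp)
    (hmin : isMinus am) (hplus : isPlus cp) :
    (∀ j k : ℕ, 1 ≤ j → 1 ≤ k →
      Tmat (starProd am (starProd b cp)) j k =
        ∑' l : ℕ, ∑' l' : ℕ, Tmat am j (l + 1) * Tmat b (l + 1) (l' + 1) * Tmat cp (l' + 1) k) ∧
    (∀ j k : ℕ, 1 ≤ j → 1 ≤ k →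
      Tmat (starProd am b) j k = ∑' l : ℕ, Tmat am j (l + 1) * Tmat b (l + 1) k) ∧
    (∀ j k : ℕ, 1 ≤ j → 1 ≤ k →
      Tmat (starProd b cp) j k = ∑' l : ℕ, Tmat b j (l + 1) * Tmat cp (l + 1) k) := by
  obtain ⟨ρ1, hρ1, ha1, M1, hM1⟩ := ham
  obtain ⟨ρ2, hρ2, ha2, M2, hM2⟩ := hb
  obtain ⟨ρ3, hρ3, ha3, M3, hM3⟩ := hcp
  set ρ : ℝ := max ρ1 (max ρ2 ρ3) with hρdef
  have hρ0 : 0 < ρ := lt_of_lt_of_le hρ1.1 (le_max_left _ _)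
  have hρlt1 : ρ < 1 := max_lt hρ1.2 (max_lt hρ2.2 hρ3.2)
  set t : ℝ := (ρ + 1) / 2 with htdef
  have hρt : ρ < t := by rw [htdef]; linarith
  have ht1 : t < 1 := by rw [htdef]; linarith
  have ht0 : 0 < t := by rw [htdef]; linarith
  set r : ℝ := Real.sqrt t with hrdef
  have hr0 : 0 < r := Real.sqrt_pos.mpr ht0
  have hrr : r * r = t := Real.mul_self_sqrt ht0.le
  have hr1 : r < 1 := by nlinarith
  have hrr_le_r : r * r ≤ r := by nlinarith
  -- nonnegativity of the bounds
  have hone : ∀ {σ : ℝ}, σ ∈ Set.Ioo (0:ℝ) 1 → (1 : ℂ) ∈ annulus σ := by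
    intro σ hσ
    exact ⟨by simpa using hσ.2, by simpa using (one_lt_inv₀ hσ.1).mpr hσ.2⟩
  have hM10 : 0 ≤ M1 := le_trans (norm_nonneg (am 0 1)) (hM1 0 1 (hone hρ1))
  have hM20 : 0 ≤ M2 := le_trans (norm_nonneg (b 0 1)) (hM2 0 1 (hone hρ2))
  have hM30 : 0 ≤ M3 := le_trans (norm_nonneg (cp 0 1)) (hM3 0 1 (hone hρ3))
  -- coefficient decay at rate `r * r = t`
  have hDa : ∀ k m, ‖fCoef (am k) m‖ ≤ M1 * (r * r) ^ m.natAbs := by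
    intro k m
    rw [hrr]
    exact aux_fCoef_decay hρ1.1 (lt_of_le_of_lt (le_max_left _ _) hρt) ht1 (am k) (ha1 k)
      (fun z hz => hM1 k z hz) m
  have hDb : ∀ k m, ‖fCoef (b k) m‖ ≤ M2 * (r * r) ^ m.natAbs := by
    intro k m
    rw [hrr]
    exact aux_fCoef_decay hρ2.1
      (lt_of_le_of_lt (le_trans (le_max_left _ _) (le_max_right _ _)) hρt) ht1 (b k) (ha2 k)
      (fun z hz => hM2 k z hz) m
  have hDc : ∀ k m, ‖fCoef (cp k) m‖ ≤ M3 * (r * r) ^ m.natAbs := by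
    intro k m
    rw [hrr]
    exact aux_fCoef_decay hρ3.1
      (lt_of_le_of_lt (le_trans (le_max_right _ _) (le_max_right _ _)) hρt) ht1 (cp k) (ha3 k)
      (fun z hz => hM3 k z hz) m
  -- coefficient decay at rate `r`
  have hpow : ∀ n : ℕ, (r * r) ^ n ≤ r ^ n := fun n => pow_le_pow_left₀ (by positivity) hrr_le_r n
  have hDa' : ∀ k m, ‖fCoef (am k) m‖ ≤ M1 * r ^ m.natAbs := fun k m =>
    le_trans (hDa k m) (mul_le_mul_of_nonneg_left (hpow _) hM10)
  have hDb' : ∀ k m, ‖fCoef (b k) m‖ ≤ M2 * r ^ m.natAbs := fun k m =>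
    le_trans (hDb k m) (mul_le_mul_of_nonneg_left (hpow _) hM20)
  have hDc' : ∀ k m, ‖fCoef (cp k) m‖ ≤ M3 * r ^ m.natAbs := fun k m =>
    le_trans (hDc k m) (mul_le_mul_of_nonneg_left (hpow _) hM30)
  -- decay of the product symbol `b ⋆ cp`
  have hC0 : 0 ≤ ∑' n : ℤ, r ^ n.natAbs := tsum_nonneg (fun n => by positivity)
  have hMbc0 : 0 ≤ M2 * M3 * ∑' n : ℤ, r ^ n.natAbs := by positivity
  have hDbc : ∀ x s, ‖fCoef (starProd b cp x) s‖ ≤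
      (M2 * M3 * ∑' n : ℤ, r ^ n.natAbs) * r ^ s.natAbs :=
    fun x s => aux_fCoef_starProd_decay b cp hr0 hr1 hM20 hM30 hDb hDc x s
  refine ⟨?_, ?_, ?_⟩
  · -- triple product
    intro j k hj hk
    have hjz : (1 : ℤ) ≤ (j : ℤ) := by exact_mod_cast hj
    have hkz : (1 : ℤ) ≤ (k : ℤ) := by exact_mod_cast hk
    rw [Tmat, aux_Lmat_starProd am (starProd b cp) hr0 hr1 hM10 hMbc0 hDa' hDbc,
      aux_tsum_shift_pos (fun l hl => by rw [hmin _ _ (by omega), zero_mul])]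
    refine tsum_congr fun l => ?_
    show Lmat am (j : ℤ) ((l : ℤ) + 1) * Lmat (starProd b cp) ((l : ℤ) + 1) (k : ℤ) = _
    rw [aux_Lmat_starProd b cp hr0 hr1 hM20 hM30 hDb' hDc',
      aux_tsum_shift_pos (fun l' hl' => by rw [hplus _ _ (by omega), mul_zero]),
      ← tsum_mul_left]
    refine tsum_congr fun l' => ?_
    simp only [Tmat, Nat.cast_add, Nat.cast_one]
    ring
  · -- a₋ ⋆ b
    intro j k hj hk
    have hjz : (1 : ℤ) ≤ (j : ℤ) := by exact_mod_cast hj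
    rw [Tmat, aux_Lmat_starProd am b hr0 hr1 hM10 hM20 hDa' hDb',
      aux_tsum_shift_pos (fun l hl => by rw [hmin _ _ (by omega), zero_mul])]
    refine tsum_congr fun l => ?_
    simp only [Tmat, Nat.cast_add, Nat.cast_one]
  · -- b ⋆ c₊
    intro j k hj hk
    have hkz : (1 : ℤ) ≤ (k : ℤ) := by exact_mod_cast hk
    rw [Tmat, aux_Lmat_starProd b cp hr0 hr1 hM20 hM30 hDb' hDc',
      aux_tsum_shift_pos (fun l hl => by rw [hplus _ _ (by omega), mul_zero])]
    refine tsum_congr fun l => ?_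
    simp only [Tmat, Nat.cast_add, Nat.cast_one]

end
end

section
/- Trace identities for star-Toeplitz operators of Moyal brackets: Let a₋, b₋ ∈ V be − symbols and a₊, b₊ ∈ V be + symbols. Then: (i) every diagonal entry of T({a₋, b₋}_M) and of T({a₊, b₊}_M) vanishes, i.e. T_{j,j}({a₋,b₋}_M) = T_{j,j}({a₊,b₊}_M) = 0 for all j ≥ 1; (ii) if moreover the matrices of T(a₊) and T(b₋) have absolutely summable entries (so that they are trace class), then ∑_{j≥1} T_{j,j}({a₊, b₋}_M) converges absolutely and equals −i ∑_{m=1}^{∞} ∑_{j=1}^{m} (a_{+, j−m/2})_m (b_{−, j−m/2})_{−m}. -/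
open Filter MeasureTheory

noncomputable section

namespace StarToeplitzAux

open Complex MeasureTheory intervalIntegral Set Function

lemma two_pi_pos' : (0:ℝ) < 2 * Real.pi := by positivity

lemma norm_exp_I_mul (t : ℝ) : ‖Complex.exp (Complex.I * (t:ℂ))‖ = 1 := by
  rw [Complex.norm_exp]
  simp

lemma norm_exp_neg_I_int (m : ℤ) (t : ℝ) : ‖Complex.exp (-(Complex.I * (m:ℂ) * (t:ℂ)))‖ = 1 := by
  rw [Complex.norm_exp]
  simp

lemma neg_one_zpow_neg (n : ℤ) : ((-1 : ℂ)) ^ (-n) = (-1:ℂ) ^ n := by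
  rw [zpow_neg, ← inv_zpow]
  norm_num

lemma integral_exp_int (n : ℤ) :
    (∫ p in (-Real.pi)..Real.pi, Complex.exp (Complex.I * (n:ℂ) * (p:ℝ)))
      = if n = 0 then ((2*Real.pi : ℝ) : ℂ) else 0 := by
  rcases eq_or_ne n 0 with rfl | hn
  · simp only [Int.cast_zero, mul_zero, zero_mul, Complex.exp_zero, if_pos rfl]
    rw [intervalIntegral.integral_const, sub_neg_eq_add, Complex.real_smul]
    push_cast
    ring
  · have hc : Complex.I * (n:ℂ) ≠ 0 := by
      simp [Complex.I_ne_zero, hn]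
    rw [if_neg hn, integral_exp_mul_complex hc]
    have h1 : Complex.I * (n:ℂ) * ((Real.pi : ℝ):ℂ) = (n:ℤ) * ((Real.pi:ℂ) * Complex.I) := by
      push_cast; ring
    have h2 : Complex.I * (n:ℂ) * ((-Real.pi : ℝ):ℂ) = ((-n:ℤ):ℂ) * ((Real.pi:ℂ) * Complex.I) := by
      push_cast; ring
    rw [h1, h2, Complex.exp_int_mul, Complex.exp_int_mul, Complex.exp_pi_mul_I,
      neg_one_zpow_neg, sub_self, zero_div]

end StarToeplitzAux

namespace StarToeplitzAux

lemma fCoef_bound_annulus {ρ : ℝ} {a : Symb} (hρ : ρ ∈ Set.Ioo (0:ℝ) 1) (ha : memVrho ρ a) :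
    ∃ C σ : ℝ, 0 ≤ C ∧ σ ∈ Set.Ioo (0:ℝ) 1 ∧
      ∀ k m : ℤ, ‖fCoef (a k) m‖ ≤ C * σ ^ m.natAbs := by
  obtain ⟨hA, M, hM⟩ := ha
  obtain ⟨hρ0, hρ1⟩ := hρ
  set σ : ℝ := (1 + ρ)/2 with hσdef
  have hρσ : ρ < σ := by rw [hσdef]; linarith
  have hσ1 : σ < 1 := by rw [hσdef]; linarith
  have hσ0 : 0 < σ := by linarith
  have hσne : σ ≠ 0 := hσ0.ne'
  refine ⟨max M 0, σ, le_max_right _ _, ⟨hσ0, hσ1⟩, ?_⟩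
  intro k m
  set f : ℂ → ℂ := a k with hf
  have hbd : ∀ z ∈ annulus ρ, ‖f z‖ ≤ max M 0 := fun z hz => (hM k z hz).trans (le_max_left _ _)
  have hdiff : ∀ z ∈ annulus ρ, DifferentiableAt ℂ (fun w => f w * w ^ (-m-1 : ℤ)) z := by
    intro z hz
    have hz0 : z ≠ 0 := by
      intro h
      rw [h] at hz
      have : ρ < 0 := by simpa using hz.1
      linarith
    exact (hA k z hz).differentiableAt.mul (differentiableAt_zpow.mpr (Or.inl hz0))
  have hsub : ∀ r R : ℝ, ρ < r → R < ρ⁻¹ →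
      ∀ z : ℂ, z ∈ Metric.closedBall (0:ℂ) R \ Metric.ball 0 r → z ∈ annulus ρ := by
    intro r R hρr hRρ z hz
    obtain ⟨hz1, hz2⟩ := hz
    rw [Metric.mem_closedBall, dist_zero_right] at hz1
    rw [Metric.mem_ball, dist_zero_right, not_lt] at hz2
    exact ⟨lt_of_lt_of_le hρr hz2, lt_of_le_of_lt hz1 hRρ⟩
  have jump : ∀ r R : ℝ, 0 < r → r ≤ R → ρ < r → R < ρ⁻¹ →
      (∮ z in C(0, R), f z * z ^ (-m-1:ℤ)) = ∮ z in C(0, r), f z * z ^ (-m-1:ℤ) := by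
    intro r R h0 hle hρr hRρ
    refine Complex.circleIntegral_eq_of_differentiable_on_annulus_off_countable h0 hle
      Set.countable_empty ?_ ?_
    · intro z hz
      exact (hdiff z (hsub r R hρr hRρ z hz)).continuousAt.continuousWithinAt
    · intro z hz
      refine hdiff z (hsub r R hρr hRρ z ?_)
      exact ⟨Metric.ball_subset_closedBall hz.1.1, fun h => hz.1.2 (Metric.ball_subset_closedBall h)⟩
  have hbound : ∀ r : ℝ, 0 < r → ρ < r → r < ρ⁻¹ →
      ‖∮ z in C(0, r), f z * z ^ (-m-1:ℤ)‖ ≤ 2 * Real.pi * (max M 0 * r ^ (-m : ℤ)) := by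
    intro r h0 h1 h2
    have hband : ∀ z ∈ Metric.sphere (0:ℂ) r, ‖f z * z ^ (-m-1:ℤ)‖ ≤ max M 0 * r ^ (-m-1:ℤ) := by
      intro z hz
      have hzn : ‖z‖ = r := by
        rw [Metric.mem_sphere, dist_zero_right] at hz
        exact hz
      have hzA : z ∈ annulus ρ := by
        constructor
        · rw [hzn]; exact h1
        · rw [hzn]; exact h2
      rw [norm_mul, norm_zpow, hzn]
      exact mul_le_mul (hbd z hzA) le_rfl (zpow_nonneg h0.le _) (le_max_right _ _)
    have hc := circleIntegral.norm_integral_le_of_norm_le_const (c := (0:ℂ)) (R := r)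
      (f := fun z => f z * z ^ (-m-1:ℤ)) h0.le hband
    refine hc.trans (le_of_eq ?_)
    have hr : r * r ^ (-m-1:ℤ) = r ^ (-m:ℤ) := by
      rw [show r * r ^ (-m-1:ℤ) = r ^ (1:ℤ) * r ^ (-m-1:ℤ) by rw [zpow_one],
        ← zpow_add₀ h0.ne']
      congr 1
      ring
    rw [mul_assoc, ← hr]
    ring
  -- express the norm of fCoef via the circle integral of radius 1
  set F : ℝ → ℂ := fun θ => f (Complex.exp (Complex.I * (θ:ℂ))) * Complex.exp (-(Complex.I * (m:ℂ) * (θ:ℂ))) with hF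
  have h1 : (∮ z in C(0,(1:ℝ)), f z * z ^ (-m-1:ℤ))
      = Complex.I * ∫ θ in (0:ℝ)..(2*Real.pi), F θ := by
    rw [circleIntegral, ← intervalIntegral.integral_const_mul]
    refine intervalIntegral.integral_congr fun θ _ => ?_
    have hcm : circleMap 0 1 θ = Complex.exp (Complex.I * (θ:ℂ)) := by
      simp [circleMap, mul_comm]
    rw [deriv_circleMap, hcm, smul_eq_mul]
    have hne : Complex.exp (Complex.I * (θ:ℂ)) ≠ 0 := Complex.exp_ne_zero _
    have hz : Complex.exp (Complex.I*(θ:ℂ)) * Complex.exp (Complex.I*(θ:ℂ)) ^ (-m-1:ℤ)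
        = Complex.exp (-(Complex.I*(m:ℂ)*(θ:ℂ))) := by
      rw [show Complex.exp (Complex.I*(θ:ℂ)) * Complex.exp (Complex.I*(θ:ℂ)) ^ (-m-1:ℤ)
          = Complex.exp (Complex.I*(θ:ℂ)) ^ (1 + (-m-1) : ℤ) by
            rw [zpow_add₀ hne, zpow_one],
        show (1 + (-m-1) : ℤ) = -m by ring, ← Complex.exp_int_mul]
      congr 1
      push_cast
      ring
    calc Complex.exp (Complex.I*(θ:ℂ)) * Complex.I *
          (f (Complex.exp (Complex.I*(θ:ℂ))) * Complex.exp (Complex.I*(θ:ℂ)) ^ (-m-1:ℤ))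
        = Complex.I * (f (Complex.exp (Complex.I*(θ:ℂ))) *
            (Complex.exp (Complex.I*(θ:ℂ)) * Complex.exp (Complex.I*(θ:ℂ)) ^ (-m-1:ℤ))) := by ring
      _ = Complex.I * F θ := by rw [hz]
  have hper : Function.Periodic F (2*Real.pi) := by
    intro θ
    have e1 : Complex.I * ((θ + 2*Real.pi : ℝ):ℂ) = Complex.I*(θ:ℂ) + 2*(Real.pi:ℂ)*Complex.I := by
      push_cast; ring
    have e2 : -(Complex.I * (m:ℂ) * ((θ + 2*Real.pi:ℝ):ℂ))
        = -(Complex.I*(m:ℂ)*(θ:ℂ)) + ((-m:ℤ):ℂ) * (2*(Real.pi:ℂ)*Complex.I) := by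
      push_cast; ring
    simp only [hF]
    rw [e1, e2, Complex.exp_add, Complex.exp_add, Complex.exp_two_pi_mul_I,
      Complex.exp_int_mul, Complex.exp_two_pi_mul_I, one_zpow, mul_one, mul_one]
  have h2 : (∫ θ in (0:ℝ)..(2*Real.pi), F θ) = ∫ θ in (-Real.pi)..Real.pi, F θ := by
    have := hper.intervalIntegral_add_eq 0 (-Real.pi)
    rw [zero_add] at this
    rw [this, show -Real.pi + 2*Real.pi = Real.pi by ring]
  have key : ‖fCoef f m‖ = (2*Real.pi)⁻¹ * ‖∮ z in C(0,(1:ℝ)), f z * z ^ (-m-1:ℤ)‖ := by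
    have h3 : fCoef f m = (2*(Real.pi:ℂ))⁻¹ * ∫ θ in (-Real.pi)..Real.pi, F θ := rfl
    rw [h3, norm_mul, h1, ← h2, norm_mul, Complex.norm_I, one_mul]
    congr 1
    rw [norm_inv, show (2*(Real.pi:ℂ)) = ((2*Real.pi:ℝ):ℂ) by push_cast; ring,
      Complex.norm_real, Real.norm_of_nonneg two_pi_pos'.le]
  have habs : (2*Real.pi)⁻¹ * (2 * Real.pi * (max M 0 * σ ^ m.natAbs)) = max M 0 * σ ^ m.natAbs := by
    rw [← mul_assoc, inv_mul_cancel₀ two_pi_pos'.ne', one_mul]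
  rcases le_or_gt 0 m with hm | hm
  · have hinv1 : (1:ℝ) ≤ σ⁻¹ := by
      rw [le_inv_comm₀ one_pos hσ0]
      simpa using hσ1.le
    have hinvρ : σ⁻¹ < ρ⁻¹ := by
      exact inv_strictAnti₀ hρ0 hρσ
    have hρinv1 : (1:ℝ) < ρ⁻¹ := by
      rw [lt_inv_comm₀ one_pos hρ0]
      simpa using hρ1
    have hj := jump 1 σ⁻¹ one_pos hinv1 hρ1 hinvρ
    rw [key, ← hj]
    have hb := hbound σ⁻¹ (inv_pos.mpr hσ0) (lt_of_lt_of_le hρ1 hinv1) hinvρ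
    have hzs : (σ⁻¹ : ℝ) ^ (-m:ℤ) = σ ^ m.natAbs := by
      rw [inv_zpow, ← zpow_neg, neg_neg, ← zpow_natCast σ m.natAbs]
      congr 1
      omega
    rw [hzs] at hb
    calc (2*Real.pi)⁻¹ * ‖∮ z in C(0, σ⁻¹), f z * z ^ (-m-1:ℤ)‖
        ≤ (2*Real.pi)⁻¹ * (2 * Real.pi * (max M 0 * σ ^ m.natAbs)) := by
          exact mul_le_mul_of_nonneg_left hb (by positivity)
      _ = max M 0 * σ ^ m.natAbs := habs
  · have hρinv1 : (1:ℝ) < ρ⁻¹ := by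
      rw [lt_inv_comm₀ one_pos hρ0]
      simpa using hρ1
    have hj := jump σ 1 hσ0 hσ1.le hρσ hρinv1
    rw [key, hj]
    have hb := hbound σ hσ0 hρσ (lt_trans hσ1 hρinv1)
    have hzs : (σ : ℝ) ^ (-m:ℤ) = σ ^ m.natAbs := by
      rw [← zpow_natCast σ m.natAbs]
      congr 1
      omega
    rw [hzs] at hb
    calc (2*Real.pi)⁻¹ * ‖∮ z in C(0, σ), f z * z ^ (-m-1:ℤ)‖
        ≤ (2*Real.pi)⁻¹ * (2 * Real.pi * (max M 0 * σ ^ m.natAbs)) := by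
          exact mul_le_mul_of_nonneg_left hb (by positivity)
      _ = max M 0 * σ ^ m.natAbs := habs

end StarToeplitzAux

namespace StarToeplitzAux

lemma summable_geo_int {σ : ℝ} (h0 : 0 < σ) (h1 : σ < 1) :
    Summable (fun m : ℤ => σ ^ m.natAbs) := by
  refine Summable.of_nat_of_neg ?_ ?_ <;>
    simpa using summable_geometric_of_lt_one h0.le h1

lemma two_pi_C_ne : (2*(Real.pi:ℂ)) ≠ 0 := by
  simp [Real.pi_ne_zero]

set_option maxHeartbeats 1600000 in
lemma star_core {a b : Symb} {Ca Cb σ : ℝ} (hσ0 : 0 < σ) (hσ1 : σ < 1)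
    (hCa : ∀ k m : ℤ, ‖fCoef (a k) m‖ ≤ Ca * σ ^ m.natAbs)
    (hCb : ∀ k m : ℤ, ‖fCoef (b k) m‖ ≤ Cb * σ ^ m.natAbs) (x l : ℤ) :
    IntervalIntegrable (fun p : ℝ => starProd a b x (Complex.exp (Complex.I * (p:ℂ))) *
        Complex.exp (-(Complex.I * (l:ℂ) * (p:ℂ)))) MeasureTheory.volume (-Real.pi) Real.pi ∧
    fCoef (starProd a b x) l
      = ∑' m : ℤ, fCoef (a (x + m)) (l - m) * fCoef (b (x - (l - m))) m := by
  have hCa0 : 0 ≤ Ca := by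
    have := (norm_nonneg (fCoef (a 0) 0)).trans (hCa 0 0)
    simpa using this
  have hCb0 : 0 ≤ Cb := by
    have := (norm_nonneg (fCoef (b 0) 0)).trans (hCb 0 0)
    simpa using this
  set G : ℤ×ℤ → ℝ → ℂ := fun mn p =>
    Complex.exp (Complex.I * (p:ℂ)) ^ (mn.1 + mn.2) * fCoef (a (x + mn.1)) mn.2 *
      fCoef (b (x - mn.2)) mn.1 * Complex.exp (-(Complex.I * (l:ℂ) * (p:ℂ))) with hG
  set u : ℤ×ℤ → ℝ := fun mn => (Cb * σ ^ mn.1.natAbs) * (Ca * σ ^ mn.2.natAbs) with hu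
  have h1s : Summable (fun m : ℤ => Ca * σ ^ m.natAbs) := (summable_geo_int hσ0 hσ1).mul_left Ca
  have h2s : Summable (fun m : ℤ => Cb * σ ^ m.natAbs) := (summable_geo_int hσ0 hσ1).mul_left Cb
  have husum : Summable u :=
    Summable.mul_of_nonneg h2s h1s (fun m => by positivity) (fun m => by positivity)
  have hprodbd : ∀ mn : ℤ×ℤ, ‖fCoef (a (x + mn.1)) mn.2‖ * ‖fCoef (b (x - mn.2)) mn.1‖ ≤ u mn := by
    intro mn
    calc ‖fCoef (a (x + mn.1)) mn.2‖ * ‖fCoef (b (x - mn.2)) mn.1‖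
        ≤ (Ca * σ ^ mn.2.natAbs) * (Cb * σ ^ mn.1.natAbs) :=
          mul_le_mul (hCa _ _) (hCb _ _) (norm_nonneg _) (by positivity)
      _ = u mn := mul_comm _ _
  have hGbound : ∀ mn p, ‖G mn p‖ ≤ u mn := by
    intro mn p
    simp only [hG]
    rw [norm_mul, norm_mul, norm_mul, norm_zpow, norm_exp_I_mul, one_zpow, one_mul,
      norm_exp_neg_I_int, mul_one]
    exact hprodbd mn
  have hGcont : ∀ mn, Continuous (G mn) := by
    intro mn
    have : G mn = fun p : ℝ =>
        Complex.exp (((mn.1 + mn.2 : ℤ):ℂ) * (Complex.I * (p:ℂ))) * fCoef (a (x + mn.1)) mn.2 *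
          fCoef (b (x - mn.2)) mn.1 * Complex.exp (-(Complex.I * (l:ℂ) * (p:ℂ))) := by
      funext p
      simp only [hG]
      rw [Complex.exp_int_mul]
    rw [this]
    refine ((((Complex.continuous_exp.comp ?_).mul continuous_const).mul continuous_const).mul
      (Complex.continuous_exp.comp ?_))
    · exact continuous_const.mul (continuous_const.mul Complex.continuous_ofReal)
    · exact (continuous_const.mul Complex.continuous_ofReal).neg
  have hpt : ∀ p : ℝ, starProd a b x (Complex.exp (Complex.I * (p:ℂ))) *
      Complex.exp (-(Complex.I * (l:ℂ) * (p:ℂ))) = ∑' mn : ℤ×ℤ, G mn p := by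
    intro p
    simp only [starProd, hG]
    exact (tsum_mul_right).symm
  have hcont : Continuous (fun p : ℝ => ∑' mn : ℤ×ℤ, G mn p) :=
    continuous_tsum hGcont husum (fun mn p => hGbound mn p)
  have hInt : IntervalIntegrable (fun p : ℝ => starProd a b x (Complex.exp (Complex.I * (p:ℂ))) *
      Complex.exp (-(Complex.I * (l:ℂ) * (p:ℂ)))) MeasureTheory.volume (-Real.pi) Real.pi := by
    have heq : (fun p : ℝ => starProd a b x (Complex.exp (Complex.I * (p:ℂ))) *
        Complex.exp (-(Complex.I * (l:ℂ) * (p:ℂ)))) = fun p => ∑' mn : ℤ×ℤ, G mn p := funext hpt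
    rw [heq]
    exact hcont.intervalIntegrable _ _
  refine ⟨hInt, ?_⟩
  have hle : -Real.pi ≤ Real.pi := by linarith [Real.pi_pos]
  have hGint : ∀ mn, MeasureTheory.IntegrableOn (G mn) (Set.Ioc (-Real.pi) Real.pi) :=
    fun mn => (hGcont mn).integrableOn_Ioc
  have hGnormint : Summable (fun mn => ∫ p in Set.Ioc (-Real.pi) Real.pi, ‖G mn p‖) := by
    refine Summable.of_nonneg_of_le
      (fun mn => MeasureTheory.integral_nonneg (fun p => norm_nonneg _))
      (fun mn => ?_) (husum.mul_left (2*Real.pi))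
    calc (∫ p in Set.Ioc (-Real.pi) Real.pi, ‖G mn p‖)
        ≤ ∫ _p in Set.Ioc (-Real.pi) Real.pi, u mn := by
          refine MeasureTheory.integral_mono ((hGint mn).norm) ?_ (fun p => hGbound mn p)
          exact MeasureTheory.integrableOn_const measure_Ioc_lt_top.ne
      _ = (2*Real.pi) * u mn := by
        rw [MeasureTheory.setIntegral_const, Real.volume_real_Ioc_of_le hle, smul_eq_mul]
        ring_nf
  have hkey := MeasureTheory.integral_tsum_of_summable_integral_norm
    (μ := MeasureTheory.volume.restrict (Set.Ioc (-Real.pi) Real.pi)) hGint hGnormint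
  have hterm : ∀ mn : ℤ×ℤ, (∫ p in Set.Ioc (-Real.pi) Real.pi, G mn p)
      = ((2*Real.pi:ℝ):ℂ) * (if mn.1 + mn.2 = l then
          fCoef (a (x + mn.1)) mn.2 * fCoef (b (x - mn.2)) mn.1 else 0) := by
    intro mn
    rw [← intervalIntegral.integral_of_le hle]
    have hform : ∀ p : ℝ, G mn p = fCoef (a (x + mn.1)) mn.2 * fCoef (b (x - mn.2)) mn.1 *
        Complex.exp (Complex.I * ((mn.1 + mn.2 - l : ℤ):ℂ) * (p:ℂ)) := by
      intro p
      simp only [hG]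
      have hexp : Complex.exp (((mn.1+mn.2:ℤ):ℂ) * (Complex.I*(p:ℂ))) *
          Complex.exp (-(Complex.I*(l:ℂ)*(p:ℂ)))
          = Complex.exp (Complex.I * ((mn.1 + mn.2 - l : ℤ):ℂ) * (p:ℂ)) := by
        rw [← Complex.exp_add]
        congr 1
        push_cast
        ring
      rw [← Complex.exp_int_mul]
      calc Complex.exp (((mn.1+mn.2:ℤ):ℂ) * (Complex.I*(p:ℂ))) * fCoef (a (x + mn.1)) mn.2 *
            fCoef (b (x - mn.2)) mn.1 * Complex.exp (-(Complex.I * (l:ℂ) * (p:ℂ)))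
          = fCoef (a (x + mn.1)) mn.2 * fCoef (b (x - mn.2)) mn.1 *
            (Complex.exp (((mn.1+mn.2:ℤ):ℂ) * (Complex.I*(p:ℂ))) *
              Complex.exp (-(Complex.I*(l:ℂ)*(p:ℂ)))) := by ring
        _ = fCoef (a (x + mn.1)) mn.2 * fCoef (b (x - mn.2)) mn.1 *
            Complex.exp (Complex.I * ((mn.1 + mn.2 - l : ℤ):ℂ) * (p:ℂ)) := by rw [hexp]
    rw [intervalIntegral.integral_congr (fun p _ => hform p),
      intervalIntegral.integral_const_mul, integral_exp_int (mn.1+mn.2-l)]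
    by_cases h : mn.1 + mn.2 = l
    · rw [if_pos (by omega : mn.1 + mn.2 - l = 0), if_pos h]
      ring
    · rw [if_neg (by omega : ¬ (mn.1 + mn.2 - l = 0)), if_neg h]
      ring
  set ee : ℤ×ℤ → ℂ := fun mn => if mn.1 + mn.2 = l then
      fCoef (a (x + mn.1)) mn.2 * fCoef (b (x - mn.2)) mn.1 else 0 with hee
  have hsum1 : fCoef (starProd a b x) l = ∑' mn : ℤ×ℤ, ee mn := by
    have h0 : fCoef (starProd a b x) l = (2*(Real.pi:ℂ))⁻¹ *
        ∫ p in (-Real.pi)..Real.pi, starProd a b x (Complex.exp (Complex.I * (p:ℂ))) *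
          Complex.exp (-(Complex.I * (l:ℂ) * (p:ℂ))) := rfl
    rw [h0, intervalIntegral.integral_congr (fun p _ => hpt p),
      intervalIntegral.integral_of_le hle, ← hkey, tsum_congr hterm, tsum_mul_left,
      ← mul_assoc]
    rw [show ((2*Real.pi:ℝ):ℂ) = 2*(Real.pi:ℂ) by push_cast; ring,
      inv_mul_cancel₀ two_pi_C_ne, one_mul]
  have hees : Summable ee := by
    refine Summable.of_norm_bounded husum (fun mn => ?_)
    simp only [hee]
    split_ifs with h
    · exact (norm_mul _ _).le.trans (hprodbd mn)
    · simpa using (by positivity : (0:ℝ) ≤ u mn)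
  set sh : ℤ×ℤ ≃ ℤ×ℤ :=
    ⟨fun mk => (mk.1, mk.2 - mk.1), fun mn => (mn.1, mn.2 + mn.1),
      fun p => by cases p with | mk m k => simp,
      fun p => by cases p with | mk m k => simp⟩ with hsh
  have h5 : ∑' mn : ℤ×ℤ, ee mn = ∑' mk : ℤ×ℤ, ee (sh mk) := (sh.tsum_eq ee).symm
  have hsh2 : Summable (fun mk : ℤ×ℤ => ee (sh mk)) := sh.summable_iff.mpr hees
  have hfib : ∀ m : ℤ, Summable (fun k : ℤ => ee (sh (m, k))) := by
    intro m
    refine summable_of_ne_finset_zero (s := {l}) (fun k hk => ?_)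
    simp only [Finset.mem_singleton] at hk
    simp only [hsh, hee, Equiv.coe_fn_mk, add_sub_cancel]
    exact if_neg hk
  have h6 : ∑' mk : ℤ×ℤ, ee (sh mk) = ∑' m : ℤ, ∑' k : ℤ, ee (sh (m, k)) :=
    Summable.tsum_prod' hsh2 hfib
  rw [hsum1, h5, h6]
  refine tsum_congr (fun m => ?_)
  have h7 : ∀ k : ℤ, ee (sh (m, k)) = if k = l then
      fCoef (a (x + m)) (k - m) * fCoef (b (x - (k - m))) m else 0 := by
    intro k
    simp only [hsh, hee, Equiv.coe_fn_mk, add_sub_cancel]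
  rw [tsum_congr h7, tsum_eq_single l (fun k hk => if_neg hk), if_pos rfl]

end StarToeplitzAux

namespace StarToeplitzAux

lemma decay_pair {a b : Symb} (ha : memV a) (hb : memV b) :
    ∃ (Ca Cb σ : ℝ), 0 ≤ Ca ∧ 0 ≤ Cb ∧ 0 < σ ∧ σ < 1 ∧
      (∀ k m : ℤ, ‖fCoef (a k) m‖ ≤ Ca * σ ^ m.natAbs) ∧
      (∀ k m : ℤ, ‖fCoef (b k) m‖ ≤ Cb * σ ^ m.natAbs) := by
  obtain ⟨ρa, hρa, hVa⟩ := ha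
  obtain ⟨ρb, hρb, hVb⟩ := hb
  obtain ⟨Ca, σa, hCa0, hσa, hda⟩ := fCoef_bound_annulus hρa hVa
  obtain ⟨Cb, σb, hCb0, hσb, hdb⟩ := fCoef_bound_annulus hρb hVb
  refine ⟨Ca, Cb, max σa σb, hCa0, hCb0, lt_max_of_lt_left hσa.1,
    max_lt hσa.2 hσb.2, ?_, ?_⟩
  · intro k m
    exact (hda k m).trans (mul_le_mul_of_nonneg_left
      (pow_le_pow_left₀ hσa.1.le (le_max_left _ _) _) hCa0)
  · intro k m
    exact (hdb k m).trans (mul_le_mul_of_nonneg_left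
      (pow_le_pow_left₀ hσb.1.le (le_max_right _ _) _) hCb0)

set_option maxHeartbeats 800000 in
lemma fCoef_moyal {c d : Symb} {Cc Cd σ : ℝ} (hσ0 : 0 < σ) (hσ1 : σ < 1)
    (hCc : ∀ k m : ℤ, ‖fCoef (c k) m‖ ≤ Cc * σ ^ m.natAbs)
    (hCd : ∀ k m : ℤ, ‖fCoef (d k) m‖ ≤ Cd * σ ^ m.natAbs) (x l : ℤ) :
    fCoef (moyalBracket c d x) l = -Complex.I *
      ((∑' m : ℤ, fCoef (c (x + m)) (l - m) * fCoef (d (x - (l - m))) m) -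
       (∑' m : ℤ, fCoef (d (x + m)) (l - m) * fCoef (c (x - (l - m))) m)) := by
  obtain ⟨hInt1, hF1⟩ := star_core hσ0 hσ1 hCc hCd x l
  obtain ⟨hInt2, hF2⟩ := star_core hσ0 hσ1 hCd hCc x l
  have h0 : fCoef (moyalBracket c d x) l = (2*(Real.pi:ℂ))⁻¹ *
      ∫ p in (-Real.pi)..Real.pi, moyalBracket c d x (Complex.exp (Complex.I*(p:ℂ))) *
        Complex.exp (-(Complex.I*(l:ℂ)*(p:ℂ))) := rfl
  have hptw : ∀ p : ℝ, moyalBracket c d x (Complex.exp (Complex.I*(p:ℂ))) *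
      Complex.exp (-(Complex.I*(l:ℂ)*(p:ℂ)))
      = -Complex.I * ((starProd c d x (Complex.exp (Complex.I*(p:ℂ))) *
          Complex.exp (-(Complex.I*(l:ℂ)*(p:ℂ)))) -
        (starProd d c x (Complex.exp (Complex.I*(p:ℂ))) *
          Complex.exp (-(Complex.I*(l:ℂ)*(p:ℂ))))) := by
    intro p
    simp only [moyalBracket]
    ring
  have e1 : fCoef (starProd c d x) l = (2*(Real.pi:ℂ))⁻¹ *
      ∫ p in (-Real.pi)..Real.pi, starProd c d x (Complex.exp (Complex.I*(p:ℂ))) *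
        Complex.exp (-(Complex.I*(l:ℂ)*(p:ℂ))) := rfl
  have e2 : fCoef (starProd d c x) l = (2*(Real.pi:ℂ))⁻¹ *
      ∫ p in (-Real.pi)..Real.pi, starProd d c x (Complex.exp (Complex.I*(p:ℂ))) *
        Complex.exp (-(Complex.I*(l:ℂ)*(p:ℂ))) := rfl
  rw [h0, intervalIntegral.integral_congr (fun p _ => hptw p),
    intervalIntegral.integral_const_mul, intervalIntegral.integral_sub hInt1 hInt2,
    ← hF1, ← hF2, e1, e2]
  ring

lemma tsum_minus_minus {c d : Symb} (hc : isMinus c) (hd : isMinus d) (t : ℤ) :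
    (∑' m : ℤ, fCoef (c (t + t + m)) (0 - m) * fCoef (d (t + t - (0 - m))) m)
      = fCoef (c (t + t)) 0 * fCoef (d (t + t)) 0 := by
  rw [tsum_eq_single 0 ?side]
  · norm_num
  case side =>
    intro m hm
    rcases lt_or_gt_of_ne hm with hml | hmg
    · have h := hc t (t + m) (by omega)
      simp only [Lmat] at h
      rw [show t + (t+m) = t+t+m from by ring, show t - (t+m) = 0-m from by ring] at h
      rw [h, zero_mul]
    · have h := hd (t + m) t (by omega)
      simp only [Lmat] at h
      rw [show (t+m) + t = t + t - (0 - m) from by ring, show (t+m) - t = m from by ring] at h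
      rw [h, mul_zero]

lemma tsum_plus_plus {c d : Symb} (hc : isPlus c) (hd : isPlus d) (t : ℤ) :
    (∑' m : ℤ, fCoef (c (t + t + m)) (0 - m) * fCoef (d (t + t - (0 - m))) m)
      = fCoef (c (t + t)) 0 * fCoef (d (t + t)) 0 := by
  rw [tsum_eq_single 0 ?side]
  · norm_num
  case side =>
    intro m hm
    rcases lt_or_gt_of_ne hm with hml | hmg
    · have h := hd (t + m) t (by omega)
      simp only [Lmat] at h
      rw [show (t+m) + t = t + t - (0 - m) from by ring, show (t+m) - t = m from by ring] at h
      rw [h, mul_zero]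
    · have h := hc t (t + m) (by omega)
      simp only [Lmat] at h
      rw [show t + (t+m) = t+t+m from by ring, show t - (t+m) = 0-m from by ring] at h
      rw [h, zero_mul]

lemma diag_mm {c d : Symb} {Cc Cd σ : ℝ} (hσ0 : 0 < σ) (hσ1 : σ < 1)
    (hCc : ∀ k m : ℤ, ‖fCoef (c k) m‖ ≤ Cc * σ ^ m.natAbs)
    (hCd : ∀ k m : ℤ, ‖fCoef (d k) m‖ ≤ Cd * σ ^ m.natAbs)
    (hc : isMinus c) (hd : isMinus d) (t : ℤ) :
    fCoef (moyalBracket c d (t + t)) 0 = 0 := by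
  rw [fCoef_moyal hσ0 hσ1 hCc hCd, tsum_minus_minus hc hd, tsum_minus_minus hd hc]
  ring

lemma diag_pp {c d : Symb} {Cc Cd σ : ℝ} (hσ0 : 0 < σ) (hσ1 : σ < 1)
    (hCc : ∀ k m : ℤ, ‖fCoef (c k) m‖ ≤ Cc * σ ^ m.natAbs)
    (hCd : ∀ k m : ℤ, ‖fCoef (d k) m‖ ≤ Cd * σ ^ m.natAbs)
    (hc : isPlus c) (hd : isPlus d) (t : ℤ) :
    fCoef (moyalBracket c d (t + t)) 0 = 0 := by
  rw [fCoef_moyal hσ0 hσ1 hCc hCd, tsum_plus_plus hc hd, tsum_plus_plus hd hc]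
  ring

lemma tsum_plus_minus_A {c d : Symb} (hc : isPlus c) (t : ℤ) :
    (∑' m : ℤ, fCoef (c (t + t + m)) (0 - m) * fCoef (d (t + t - (0 - m))) m)
      = ∑' k : ℕ, fCoef (c (t + t - k)) k * fCoef (d (t + t - k)) (-(k:ℤ)) := by
  have hvan : ∀ m : ℤ, 0 < m →
      fCoef (c (t+t+m)) (0-m) * fCoef (d (t+t-(0-m))) m = 0 := by
    intro m hm
    have h := hc t (t+m) (by omega)
    simp only [Lmat] at h
    rw [show t + (t+m) = t+t+m from by ring, show t - (t+m) = 0-m from by ring] at h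
    rw [h, zero_mul]
  have hinj : Function.Injective (fun k : ℕ => -(k:ℤ)) := by
    intro a b h
    simp only [neg_inj, Int.natCast_inj] at h
    exact h
  have hsupp : Function.support
      (fun m : ℤ => fCoef (c (t+t+m)) (0-m) * fCoef (d (t+t-(0-m))) m)
      ⊆ Set.range (fun k : ℕ => -(k:ℤ)) := by
    intro m hm
    rcases le_or_gt m 0 with h | h
    · exact ⟨m.natAbs, by show -((m.natAbs:ℤ)) = m; omega⟩
    · exact absurd (hvan m h) hm
  rw [← Function.Injective.tsum_eq hinj hsupp]
  refine tsum_congr (fun k => ?_)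
  have e1 : t + t + (-(k:ℤ)) = t + t - k := by ring
  have e2 : (0 - (-(k:ℤ))) = (k:ℤ) := by ring
  rw [e1, e2]

lemma tsum_plus_minus_B {c d : Symb} (hd : isMinus d) (t : ℤ) :
    (∑' m : ℤ, fCoef (d (t + t + m)) (0 - m) * fCoef (c (t + t - (0 - m))) m)
      = ∑' k : ℕ, fCoef (c (t + t + k)) k * fCoef (d (t + t + k)) (-(k:ℤ)) := by
  have hvan : ∀ m : ℤ, m < 0 →
      fCoef (d (t+t+m)) (0-m) * fCoef (c (t+t-(0-m))) m = 0 := by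
    intro m hm
    have h := hd t (t+m) (by omega)
    simp only [Lmat] at h
    rw [show t + (t+m) = t+t+m from by ring, show t - (t+m) = 0-m from by ring] at h
    rw [h, zero_mul]
  have hinj : Function.Injective (fun k : ℕ => (k:ℤ)) := fun a b h => Int.natCast_inj.mp h
  have hsupp : Function.support
      (fun m : ℤ => fCoef (d (t+t+m)) (0-m) * fCoef (c (t+t-(0-m))) m)
      ⊆ Set.range (fun k : ℕ => (k:ℤ)) := by
    intro m hm
    rcases le_or_gt 0 m with h | h
    · exact ⟨m.natAbs, by show ((m.natAbs:ℤ)) = m; omega⟩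
    · exact absurd (hvan m h) hm
  rw [← Function.Injective.tsum_eq hinj hsupp]
  refine tsum_congr (fun k => ?_)
  simp only [zero_sub, sub_neg_eq_add]
  rw [mul_comm]

lemma diag_pm {c d : Symb} {Cc Cd σ : ℝ} (hσ0 : 0 < σ) (hσ1 : σ < 1)
    (hCc : ∀ k m : ℤ, ‖fCoef (c k) m‖ ≤ Cc * σ ^ m.natAbs)
    (hCd : ∀ k m : ℤ, ‖fCoef (d k) m‖ ≤ Cd * σ ^ m.natAbs)
    (hc : isPlus c) (hd : isMinus d) (t : ℤ) :
    fCoef (moyalBracket c d (t + t)) 0 = -Complex.I *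
      ((∑' k : ℕ, fCoef (c (t + t - k)) k * fCoef (d (t + t - k)) (-(k:ℤ))) -
       (∑' k : ℕ, fCoef (c (t + t + k)) k * fCoef (d (t + t + k)) (-(k:ℤ)))) := by
  rw [fCoef_moyal hσ0 hσ1 hCc hCd, tsum_plus_minus_A hc, tsum_plus_minus_B hd]

end StarToeplitzAux

namespace StarToeplitzAux

/-- `g s m = (a₊)_s coefficient m times (b₋)_s coefficient -m`. -/
def gg (ap bm : Symb) : ℤ → ℤ → ℂ := fun s m => fCoef (ap s) m * fCoef (bm s) (-m)

def QQ (ap bm : Symb) : ℕ × ℕ → ℂ := fun jk =>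
  gg ap bm (((jk.1:ℤ)+1) + ((jk.1:ℤ)+1) - (jk.2:ℤ)) (jk.2:ℤ)

def PP (ap bm : Symb) : ℕ × ℕ → ℂ := fun jk =>
  gg ap bm (((jk.1:ℤ)+1) + ((jk.1:ℤ)+1) + (jk.2:ℤ)) (jk.2:ℤ)

lemma gg_congr (ap bm : Symb) {s s' m m' : ℤ} (hs : s = s') (hm : m = m') :
    gg ap bm s m = gg ap bm s' m' := by rw [hs, hm]

lemma diag_formula {ap bm : Symb} {Cc Cd σ : ℝ} (hσ0 : 0 < σ) (hσ1 : σ < 1)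
    (hCc : ∀ k m : ℤ, ‖fCoef (ap k) m‖ ≤ Cc * σ ^ m.natAbs)
    (hCd : ∀ k m : ℤ, ‖fCoef (bm k) m‖ ≤ Cd * σ ^ m.natAbs)
    (hc : isPlus ap) (hd : isMinus bm) (j : ℕ) :
    Tmat (moyalBracket ap bm) (j+1) (j+1) =
      -Complex.I * ((∑' k : ℕ, QQ ap bm (j,k)) - (∑' k : ℕ, PP ap bm (j,k))) := by
  show Lmat (moyalBracket ap bm) ((j+1:ℕ):ℤ) ((j+1:ℕ):ℤ) = _
  simp only [Lmat, sub_self]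
  rw [show ((j+1:ℕ):ℤ) + ((j+1:ℕ):ℤ) = ((j:ℤ)+1) + ((j:ℤ)+1) from by push_cast; ring]
  rw [diag_pm hσ0 hσ1 hCc hCd hc hd ((j:ℤ)+1)]
  rfl

lemma PP_toeplitz (ap bm : Symb) (j k : ℕ) :
    PP ap bm (j,k) = Tmat ap ((j+k)+1) (j+1) * Tmat bm (j+1) ((j+k)+1) := by
  have e1 : ((j+k+1:ℕ):ℤ) + ((j+1:ℕ):ℤ) = ((j:ℤ)+1) + ((j:ℤ)+1) + (k:ℤ) := by push_cast; ring
  have e2 : ((j+k+1:ℕ):ℤ) - ((j+1:ℕ):ℤ) = (k:ℤ) := by push_cast; ring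
  have e3 : ((j+1:ℕ):ℤ) + ((j+k+1:ℕ):ℤ) = ((j:ℤ)+1) + ((j:ℤ)+1) + (k:ℤ) := by push_cast; ring
  have e4 : ((j+1:ℕ):ℤ) - ((j+k+1:ℕ):ℤ) = -(k:ℤ) := by push_cast; ring
  simp only [PP, gg, Tmat, Lmat, e1, e2, e3, e4]

lemma QQ_toeplitz (ap bm : Symb) (j k : ℕ) (hkj : k ≤ j) :
    QQ ap bm (j,k) = Tmat ap (j+1) ((j-k)+1) * Tmat bm ((j-k)+1) (j+1) := by
  have hc : ((j-k:ℕ):ℤ) = (j:ℤ) - (k:ℤ) := by omega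
  have e1 : ((j+1:ℕ):ℤ) + ((j-k+1:ℕ):ℤ) = ((j:ℤ)+1) + ((j:ℤ)+1) - (k:ℤ) := by
    push_cast [hc]; ring
  have e2 : ((j+1:ℕ):ℤ) - ((j-k+1:ℕ):ℤ) = (k:ℤ) := by push_cast [hc]; ring
  have e3 : ((j-k+1:ℕ):ℤ) + ((j+1:ℕ):ℤ) = ((j:ℤ)+1) + ((j:ℤ)+1) - (k:ℤ) := by
    push_cast [hc]; ring
  have e4 : ((j-k+1:ℕ):ℤ) - ((j+1:ℕ):ℤ) = -(k:ℤ) := by push_cast [hc]; ring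
  simp only [QQ, gg, Tmat, Lmat, e1, e2, e3, e4]

/-- The involution of `ℕ × ℕ` used to re-index `(j,k) ↦ (j, j-k)` on `{k ≤ j}`. -/
def flipE : ℕ × ℕ ≃ ℕ × ℕ where
  toFun p := if p.2 ≤ p.1 then (p.1, p.1 - p.2) else p
  invFun p := if p.2 ≤ p.1 then (p.1, p.1 - p.2) else p
  left_inv p := by
    rcases p with ⟨a, b⟩
    by_cases h : b ≤ a
    · simp only [h, if_pos, if_true]
      have h2 : a - b ≤ a := Nat.sub_le a b
      simp only [h2, if_true, if_pos]
      exact Prod.ext rfl (by omega)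
    · simp [h]
  right_inv p := by
    rcases p with ⟨a, b⟩
    by_cases h : b ≤ a
    · simp only [h, if_pos, if_true]
      have h2 : a - b ≤ a := Nat.sub_le a b
      simp only [h2, if_true, if_pos]
      exact Prod.ext rfl (by omega)
    · simp [h]

lemma summable_PP_norm {ap bm : Symb}
    (hsap : Summable (fun jk : ℕ × ℕ => ‖Tmat ap (jk.1 + 1) (jk.2 + 1)‖))
    (hsbm : Summable (fun jk : ℕ × ℕ => ‖Tmat bm (jk.1 + 1) (jk.2 + 1)‖)) :
    Summable (fun jk : ℕ × ℕ => ‖PP ap bm jk‖) := by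
  set CB : ℝ := ∑' q : ℕ × ℕ, ‖Tmat bm (q.1 + 1) (q.2 + 1)‖ with hCB
  have hble : ∀ q : ℕ × ℕ, ‖Tmat bm (q.1 + 1) (q.2 + 1)‖ ≤ CB :=
    fun q => Summable.le_tsum hsbm q (fun _ _ => norm_nonneg _)
  have hinj : Function.Injective (fun jk : ℕ × ℕ => (jk.1 + jk.2, jk.1)) := by
    intro p q h
    have h1 := congrArg Prod.fst h
    have h2 := congrArg Prod.snd h
    simp only at h1 h2
    exact Prod.ext (by omega) (by omega)
  have hmaj : Summable (fun jk : ℕ × ℕ => ‖Tmat ap ((jk.1+jk.2) + 1) (jk.1 + 1)‖ * CB) :=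
    (hsap.comp_injective hinj).mul_right CB
  refine Summable.of_nonneg_of_le (fun _ => norm_nonneg _) (fun jk => ?_) hmaj
  rcases jk with ⟨j, k⟩
  rw [PP_toeplitz, norm_mul]
  exact mul_le_mul_of_nonneg_left (hble (j, j+k)) (norm_nonneg _)

lemma summable_QQ_norm {ap bm : Symb} {Ca Cb σ : ℝ} (hσ0 : 0 < σ) (hσ1 : σ < 1)
    (hCa0 : 0 ≤ Ca) (hCb0 : 0 ≤ Cb)
    (hda : ∀ k m : ℤ, ‖fCoef (ap k) m‖ ≤ Ca * σ ^ m.natAbs)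
    (hdb : ∀ k m : ℤ, ‖fCoef (bm k) m‖ ≤ Cb * σ ^ m.natAbs)
    (hsap : Summable (fun jk : ℕ × ℕ => ‖Tmat ap (jk.1 + 1) (jk.2 + 1)‖))
    (hsbm : Summable (fun jk : ℕ × ℕ => ‖Tmat bm (jk.1 + 1) (jk.2 + 1)‖)) :
    Summable (fun jk : ℕ × ℕ => ‖QQ ap bm jk‖) := by
  have hsplit : (fun jk : ℕ × ℕ => ‖QQ ap bm jk‖) =
      (fun jk : ℕ × ℕ => if jk.2 ≤ jk.1 then ‖QQ ap bm jk‖ else 0) +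
      (fun jk : ℕ × ℕ => if jk.2 ≤ jk.1 then 0 else ‖QQ ap bm jk‖) := by
    funext jk
    by_cases h : jk.2 ≤ jk.1 <;> simp [h]
  rw [hsplit]
  refine Summable.add ?_ ?_
  · -- Toeplitz part
    set CA : ℝ := ∑' q : ℕ × ℕ, ‖Tmat ap (q.1 + 1) (q.2 + 1)‖ with hCA
    have hale : ∀ q : ℕ × ℕ, ‖Tmat ap (q.1 + 1) (q.2 + 1)‖ ≤ CA :=
      fun q => Summable.le_tsum hsap q (fun _ _ => norm_nonneg _)
    have hCA0 : 0 ≤ CA := le_trans (norm_nonneg _) (hale (0,0))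
    have hv : Summable (fun q : ℕ × ℕ => ‖Tmat bm (q.2 + 1) (q.1 + 1)‖) := by
      have := (Equiv.prodComm ℕ ℕ).summable_iff
        (f := fun jk : ℕ × ℕ => ‖Tmat bm (jk.1 + 1) (jk.2 + 1)‖)
      exact this.mpr hsbm
    have hv' : Summable (fun q : ℕ × ℕ =>
        if q.2 ≤ q.1 then ‖Tmat bm (q.2 + 1) (q.1 + 1)‖ else 0) := by
      refine Summable.of_nonneg_of_le (fun q => ?_) (fun q => ?_) hv
      · by_cases h : q.2 ≤ q.1 <;> simp [h]
      · by_cases h : q.2 ≤ q.1 <;> simp [h]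
    have hw : Summable (fun p : ℕ × ℕ =>
        if p.2 ≤ p.1 then ‖Tmat bm ((p.1 - p.2) + 1) (p.1 + 1)‖ else 0) := by
      have hcomp : (fun p : ℕ × ℕ =>
          if p.2 ≤ p.1 then ‖Tmat bm ((p.1 - p.2) + 1) (p.1 + 1)‖ else 0) =
          (fun q : ℕ × ℕ => if q.2 ≤ q.1 then ‖Tmat bm (q.2 + 1) (q.1 + 1)‖ else 0) ∘ flipE := by
        funext p
        rcases p with ⟨j, k⟩
        by_cases h : k ≤ j
        · simp only [Function.comp_apply, flipE, Equiv.coe_fn_mk, h, if_true, if_pos,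
            Nat.sub_le, if_true]
        · simp only [Function.comp_apply, flipE, Equiv.coe_fn_mk, h, if_false, if_neg]
      rw [hcomp]
      exact (flipE.summable_iff).mpr hv'
    refine Summable.of_nonneg_of_le (fun p => ?_) (fun p => ?_) (hw.mul_left CA)
    · by_cases h : p.2 ≤ p.1 <;> simp [h]
    · rcases p with ⟨j, k⟩
      by_cases h : k ≤ j
      · simp only [h, if_true, if_pos]
        rw [QQ_toeplitz ap bm j k h, norm_mul]
        exact mul_le_mul (hale (j, j - k)) le_rfl (norm_nonneg _) hCA0
      · simp [h]
  · -- geometric tail part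
    set K : ℝ := Ca * Cb with hK
    have hK0 : 0 ≤ K := mul_nonneg hCa0 hCb0
    have hw2 : Summable (fun p : ℕ × ℕ => if p.2 ≤ p.1 then 0 else K * (σ ^ p.2 * σ ^ p.2)) := by
      have hinj : Function.Injective (fun jd : ℕ × ℕ => (jd.1, jd.1 + jd.2 + 1)) := by
        intro p q h
        have h1 := congrArg Prod.fst h
        have h2 := congrArg Prod.snd h
        simp only at h1 h2
        exact Prod.ext (by omega) (by omega)
      have hzero : ∀ p : ℕ × ℕ, p ∉ Set.range (fun jd : ℕ × ℕ => (jd.1, jd.1 + jd.2 + 1)) →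
          (if p.2 ≤ p.1 then 0 else K * (σ ^ p.2 * σ ^ p.2)) = 0 := by
        intro p hp
        rcases le_or_gt p.2 p.1 with h | h
        · simp [h]
        · refine absurd ⟨(p.1, p.2 - p.1 - 1), ?_⟩ hp
          exact Prod.ext rfl (by show p.1 + (p.2 - p.1 - 1) + 1 = p.2; omega)
      rw [← Function.Injective.summable_iff hinj hzero]
      have hmaj : Summable (fun jd : ℕ × ℕ => K * (σ ^ jd.1 * σ ^ jd.2)) := by
        exact ((summable_geometric_of_lt_one hσ0.le hσ1).mul_of_nonneg
          (summable_geometric_of_lt_one hσ0.le hσ1)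
          (fun _ => by positivity) (fun _ => by positivity)).mul_left K
      refine Summable.of_nonneg_of_le (fun jd => ?_) (fun jd => ?_) hmaj
      · rcases jd with ⟨j, d⟩
        simp only [Function.comp_apply]
        by_cases h : j + d + 1 ≤ j
        · simp [h]
        · simp only [h, if_false, if_neg]
          positivity
      · rcases jd with ⟨j, d⟩
        simp only [Function.comp_apply]
        have h : ¬ (j + d + 1 ≤ j) := by omega
        simp only [h, if_false, if_neg]
        have hpow : σ ^ (j + d + 1) * σ ^ (j + d + 1) = (σ ^ j * σ ^ d) * σ ^ (j + d + 2) := by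
          rw [← pow_add, ← pow_add, ← pow_add]
          congr 1
          omega
        rw [hpow]
        refine mul_le_mul_of_nonneg_left ?_ hK0
        refine mul_le_of_le_one_right (by positivity) ?_
        exact pow_le_one₀ hσ0.le hσ1.le
    refine Summable.of_nonneg_of_le (fun p => ?_) (fun p => ?_) hw2
    · by_cases h : p.2 ≤ p.1 <;> simp [h]
    · rcases p with ⟨j, k⟩
      by_cases h : k ≤ j
      · simp [h]
      · simp only [h, if_false, if_neg]
        simp only [QQ, gg]
        rw [norm_mul]
        have h1 := hda (((j:ℤ)+1) + ((j:ℤ)+1) - (k:ℤ)) (k:ℤ)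
        have h2 := hdb (((j:ℤ)+1) + ((j:ℤ)+1) - (k:ℤ)) (-(k:ℤ))
        rw [Int.natAbs_natCast] at h1
        rw [Int.natAbs_neg, Int.natAbs_natCast] at h2
        calc ‖fCoef (ap (((j:ℤ)+1) + ((j:ℤ)+1) - (k:ℤ))) (k:ℤ)‖ *
              ‖fCoef (bm (((j:ℤ)+1) + ((j:ℤ)+1) - (k:ℤ))) (-(k:ℤ))‖
            ≤ (Ca * σ ^ k) * (Cb * σ ^ k) :=
              mul_le_mul h1 h2 (norm_nonneg _) (by positivity)
          _ = K * (σ ^ k * σ ^ k) := by rw [hK]; ring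

end StarToeplitzAux

namespace StarToeplitzAux

set_option maxHeartbeats 1600000 in
lemma part_two {ap bm : Symb} {Ca Cb σ : ℝ} (hσ0 : 0 < σ) (hσ1 : σ < 1)
    (hda : ∀ k m : ℤ, ‖fCoef (ap k) m‖ ≤ Ca * σ ^ m.natAbs)
    (hdb : ∀ k m : ℤ, ‖fCoef (bm k) m‖ ≤ Cb * σ ^ m.natAbs)
    (hap : isPlus ap) (hbm : isMinus bm)
    (hsap : Summable (fun jk : ℕ × ℕ => ‖Tmat ap (jk.1 + 1) (jk.2 + 1)‖))
    (hsbm : Summable (fun jk : ℕ × ℕ => ‖Tmat bm (jk.1 + 1) (jk.2 + 1)‖)) :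
    Summable (fun j : ℕ => ‖Tmat (moyalBracket ap bm) (j + 1) (j + 1)‖) ∧
    (∑' j : ℕ, Tmat (moyalBracket ap bm) (j + 1) (j + 1)) =
      -Complex.I * ∑' m : ℕ, ∑ j ∈ Finset.Icc 1 (m + 1),
        fCoef (ap (2 * (j : ℤ) - ((m : ℤ) + 1))) ((m : ℤ) + 1) *
          fCoef (bm (2 * (j : ℤ) - ((m : ℤ) + 1))) (-((m : ℤ) + 1)) := by
  have hCa0 : 0 ≤ Ca := by
    have := (norm_nonneg (fCoef (ap 0) 0)).trans (hda 0 0)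
    simpa using this
  have hCb0 : 0 ≤ Cb := by
    have := (norm_nonneg (fCoef (bm 0) 0)).trans (hdb 0 0)
    simpa using this
  have hQn := summable_QQ_norm hσ0 hσ1 hCa0 hCb0 hda hdb hsap hsbm
  have hPn := summable_PP_norm hsap hsbm
  have hQs : Summable (QQ ap bm) := hQn.of_norm
  have hPs : Summable (PP ap bm) := hPn.of_norm
  have hinjk : ∀ j : ℕ, Function.Injective (fun k : ℕ => ((j,k) : ℕ×ℕ)) :=
    fun j a b h => by simpa using congrArg Prod.snd h
  have hQfib : ∀ j, Summable (fun k => QQ ap bm (j,k)) :=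
    fun j => hQs.comp_injective (hinjk j)
  have hPfib : ∀ j, Summable (fun k => PP ap bm (j,k)) :=
    fun j => hPs.comp_injective (hinjk j)
  have hQnfib : ∀ j, Summable (fun k => ‖QQ ap bm (j,k)‖) :=
    fun j => hQn.comp_injective (hinjk j)
  have hPnfib : ∀ j, Summable (fun k => ‖PP ap bm (j,k)‖) :=
    fun j => hPn.comp_injective (hinjk j)
  have hQmargN : Summable (fun j : ℕ => ∑' k, ‖QQ ap bm (j,k)‖) :=
    (hQn.hasSum.prod_fiberwise (fun j => (hQnfib j).hasSum)).summable
  have hPmargN : Summable (fun j : ℕ => ∑' k, ‖PP ap bm (j,k)‖) :=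
    (hPn.hasSum.prod_fiberwise (fun j => (hPnfib j).hasSum)).summable
  have hdiagf : ∀ j : ℕ, Tmat (moyalBracket ap bm) (j+1) (j+1) =
      -Complex.I * ((∑' k : ℕ, QQ ap bm (j,k)) - (∑' k : ℕ, PP ap bm (j,k))) :=
    fun j => diag_formula hσ0 hσ1 hda hdb hap hbm j
  have hsum_diag : Summable (fun j : ℕ => ‖Tmat (moyalBracket ap bm) (j + 1) (j + 1)‖) := by
    refine Summable.of_nonneg_of_le (fun j => norm_nonneg _) (fun j => ?_) (hQmargN.add hPmargN)
    rw [hdiagf j, norm_mul]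
    rw [show ‖-Complex.I‖ = 1 by simp, one_mul]
    refine (norm_sub_le _ _).trans ?_
    exact add_le_add (norm_tsum_le_tsum_norm (hQnfib j)) (norm_tsum_le_tsum_norm (hPnfib j))
  refine ⟨hsum_diag, ?_⟩
  have hQmargC : Summable (fun j : ℕ => ∑' k, QQ ap bm (j,k)) :=
    (hQs.hasSum.prod_fiberwise (fun j => (hQfib j).hasSum)).summable
  have hPmargC : Summable (fun j : ℕ => ∑' k, PP ap bm (j,k)) :=
    (hPs.hasSum.prod_fiberwise (fun j => (hPfib j).hasSum)).summable
  have step1 : (∑' j : ℕ, Tmat (moyalBracket ap bm) (j + 1) (j + 1))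
      = -Complex.I * ((∑' p : ℕ×ℕ, QQ ap bm p) - (∑' p : ℕ×ℕ, PP ap bm p)) := by
    rw [tsum_congr hdiagf, tsum_mul_left, Summable.tsum_sub hQmargC hPmargC,
      ← Summable.tsum_prod' hQs hQfib, ← Summable.tsum_prod' hPs hPfib]
  set part1 : ℕ×ℕ → ℂ := fun p => if p.2 ≤ p.1 then QQ ap bm p else 0 with hpart1def
  set part2 : ℕ×ℕ → ℂ := fun p => if p.2 ≤ p.1 then 0 else QQ ap bm p with hpart2def
  have hp1s : Summable part1 := by
    refine Summable.of_norm_bounded hQn (fun p => ?_)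
    simp only [hpart1def]
    by_cases h : p.2 ≤ p.1 <;> simp [h]
  have hp2s : Summable part2 := by
    refine Summable.of_norm_bounded hQn (fun p => ?_)
    simp only [hpart2def]
    by_cases h : p.2 ≤ p.1 <;> simp [h]
  have hsplitsum : (∑' p : ℕ×ℕ, QQ ap bm p) = (∑' p, part1 p) + (∑' p, part2 p) := by
    rw [← Summable.tsum_add hp1s hp2s]
    refine tsum_congr (fun p => ?_)
    simp only [hpart1def, hpart2def]
    by_cases h : p.2 ≤ p.1 <;> simp [h]
  have hpart1PP : (∑' p : ℕ×ℕ, part1 p) = ∑' p : ℕ×ℕ, PP ap bm p := by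
    have hinj : Function.Injective (fun ab : ℕ×ℕ => ((ab.1+ab.2, ab.2) : ℕ×ℕ)) := by
      intro p q h
      have h1 := congrArg Prod.fst h
      have h2 := congrArg Prod.snd h
      simp only at h1 h2
      exact Prod.ext (by omega) (by omega)
    have hzero : Function.support part1 ⊆
        Set.range (fun ab : ℕ×ℕ => ((ab.1+ab.2, ab.2) : ℕ×ℕ)) := by
      intro p hp
      rcases le_or_gt p.2 p.1 with h | h
      · exact ⟨(p.1 - p.2, p.2), Prod.ext (by show p.1 - p.2 + p.2 = p.1; omega) rfl⟩
      · exfalso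
        apply hp
        simp only [hpart1def]
        rw [if_neg (by omega)]
    rw [← Function.Injective.tsum_eq hinj hzero]
    refine tsum_congr (fun ab => ?_)
    rcases ab with ⟨a, b⟩
    simp only [hpart1def]
    rw [if_pos (by show b ≤ a + b; omega)]
    show QQ ap bm (a+b, b) = PP ap bm (a,b)
    simp only [QQ, PP]
    exact gg_congr ap bm (by push_cast; ring) rfl
  have hswap : (∑' p : ℕ×ℕ, part2 p) = ∑' q : ℕ×ℕ, part2 (q.2, q.1) :=
    ((Equiv.prodComm ℕ ℕ).tsum_eq part2).symm
  have hp2sw : Summable (fun q : ℕ×ℕ => part2 (q.2, q.1)) :=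
    ((Equiv.prodComm ℕ ℕ).summable_iff (f := part2)).mpr hp2s
  have hfib2 : ∀ k : ℕ, Summable (fun j : ℕ => part2 (j, k)) := by
    intro k
    refine hp2s.comp_injective (i := fun j : ℕ => ((j, k) : ℕ×ℕ)) ?_
    intro a b h
    simpa using congrArg Prod.fst h
  have hinner : ∀ k : ℕ, (∑' j : ℕ, part2 (j, k)) = ∑ j ∈ Finset.range k, QQ ap bm (j, k) := by
    intro k
    rw [tsum_eq_sum (s := Finset.range k) ?h0]
    · refine Finset.sum_congr rfl (fun j hj => ?_)
      simp only [hpart2def]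
      rw [if_neg (by simp only [Finset.mem_range] at hj; omega)]
    case h0 =>
      intro j hj
      simp only [hpart2def]
      rw [if_pos (by simp only [Finset.mem_range] at hj; omega)]
  have hstep2 : (∑' p : ℕ×ℕ, part2 p) = ∑' k : ℕ, ∑ j ∈ Finset.range k, QQ ap bm (j, k) := by
    rw [hswap, Summable.tsum_prod' hp2sw (fun k => hfib2 k)]
    exact tsum_congr hinner
  have hh : Summable (fun k : ℕ => ∑ j ∈ Finset.range k, QQ ap bm (j, k)) := by
    have hmg : Summable (fun k : ℕ => ∑' j : ℕ, part2 (j, k)) :=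
      (hp2sw.hasSum.prod_fiberwise (fun k => (hfib2 k).hasSum)).summable
    exact hmg.congr hinner
  have hfinal : (∑' k : ℕ, ∑ j ∈ Finset.range k, QQ ap bm (j, k))
      = ∑' m : ℕ, ∑ j ∈ Finset.Icc 1 (m + 1),
          fCoef (ap (2 * (j : ℤ) - ((m : ℤ) + 1))) ((m : ℤ) + 1) *
            fCoef (bm (2 * (j : ℤ) - ((m : ℤ) + 1))) (-((m : ℤ) + 1)) := by
    rw [Summable.tsum_eq_zero_add hh]
    simp only [Finset.range_zero, Finset.sum_empty, zero_add]
    refine tsum_congr (fun m => ?_)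
    refine Finset.sum_nbij' (i := fun a => a + 1) (j := fun b => b - 1) ?_ ?_ ?_ ?_ ?_
    · intro a ha
      simp only [Finset.mem_range] at ha
      simp only [Finset.mem_Icc]
      omega
    · intro b hb
      simp only [Finset.mem_Icc] at hb
      simp only [Finset.mem_range]
      omega
    · intro a _
      show a + 1 - 1 = a
      omega
    · intro b hb
      simp only [Finset.mem_Icc] at hb
      show b - 1 + 1 = b
      omega
    · intro a _
      show QQ ap bm (a, m+1) = gg ap bm (2 * ((a+1 : ℕ) : ℤ) - ((m:ℤ)+1)) ((m:ℤ)+1)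
      simp only [QQ]
      exact gg_congr ap bm (by push_cast; ring) (by push_cast; ring)
  rw [step1, hsplitsum, hpart1PP, add_sub_cancel_left, hstep2, hfinal]

end StarToeplitzAux

/-- **Trace identities for star-Toeplitz operators of Moyal brackets** (Lemma 3.11).
(i) The diagonal entries of `T({a₋,b₋}_M)` and `T({a₊,b₊}_M)` vanish.
(ii) If the matrices of `T(a₊)` and `T(b₋)` are absolutely summable (trace class), then
`∑_j T_{j,j}({a₊,b₋}_M)` converges absolutely and equals
`-i ∑_{m≥1} ∑_{j=1}^m (a₊,_{j-m/2})_m (b₋,_{j-m/2})_{-m}`. -/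
theorem star_toeplitz_moyal_trace
    (am bm ap bp : Symb)
    (hVam : memV am) (hVbm : memV bm) (hVap : memV ap) (hVbp : memV bp)
    (ham : isMinus am) (hbm : isMinus bm) (hap : isPlus ap) (hbp : isPlus bp) :
    (∀ j : ℕ, 1 ≤ j →
        Tmat (moyalBracket am bm) j j = 0 ∧ Tmat (moyalBracket ap bp) j j = 0) ∧
    (Summable (fun jk : ℕ × ℕ => ‖Tmat ap (jk.1 + 1) (jk.2 + 1)‖) →
      Summable (fun jk : ℕ × ℕ => ‖Tmat bm (jk.1 + 1) (jk.2 + 1)‖) →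
      Summable (fun j : ℕ => ‖Tmat (moyalBracket ap bm) (j + 1) (j + 1)‖) ∧
      (∑' j : ℕ, Tmat (moyalBracket ap bm) (j + 1) (j + 1)) =
        -Complex.I * ∑' m : ℕ, ∑ j ∈ Finset.Icc 1 (m + 1),
          fCoef (ap (2 * (j : ℤ) - ((m : ℤ) + 1))) ((m : ℤ) + 1) *
            fCoef (bm (2 * (j : ℤ) - ((m : ℤ) + 1))) (-((m : ℤ) + 1))) := by
  obtain ⟨C1, C2, σ1, hC10, hC20, hσ10, hσ11, hd_am, hd_bm⟩ :=
    StarToeplitzAux.decay_pair hVam hVbm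
  obtain ⟨C3, C4, σ2, hC30, hC40, hσ20, hσ21, hd_ap, hd_bp⟩ :=
    StarToeplitzAux.decay_pair hVap hVbp
  obtain ⟨Ca, Cb, σ, hCa0, hCb0, hσ0, hσ1, hda, hdb⟩ :=
    StarToeplitzAux.decay_pair hVap hVbm
  constructor
  · intro j _
    constructor
    · show Lmat (moyalBracket am bm) (j:ℤ) (j:ℤ) = 0
      simp only [Lmat, sub_self]
      exact StarToeplitzAux.diag_mm hσ10 hσ11 hd_am hd_bm ham hbm (j:ℤ)
    · show Lmat (moyalBracket ap bp) (j:ℤ) (j:ℤ) = 0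
      simp only [Lmat, sub_self]
      exact StarToeplitzAux.diag_pp hσ20 hσ21 hd_ap hd_bp hap hbp (j:ℤ)
  · intro hsap hsbm
    exact StarToeplitzAux.part_two hσ0 hσ1 hda hdb hap hbm hsap hsbm

end
end
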